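/- arXiv:1502.00926 — 7 statements merged into one kernel-verified Lean document; each statement's English description precedes it below -/
import Mathlib

section
/- If A is an n×n real Hurwitz matrix (all eigenvalues have strictly negative real part) and Q is an n×n real symmetric positive semidefinite matrix, then the unique solution P of the Lyapunov equation P·A + Aᵀ·P + Q = 0 is given by P = ∫₀^∞ exp(Aᵀ t) Q exp(A t) dt, and this integral converges. -/
open Matrix MeasureTheory NormedSpace Polynomial Filter

open scoped Nat NNReal ENNReal Topology

namespace LyapAux

attribute [local instance] Matrix.frobeniusSeminormedAddCommGroup
  Matrix.frobeniusNormedAddCommGroup Matrix.frobeniusNormedSpace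
  Matrix.frobeniusNormedRing Matrix.frobeniusNormedAlgebra

variable {n : ℕ}

/-- applying a matrix to a fixed vector, as a linear map in the matrix -/
noncomputable def mulVecL (v : Fin n → ℂ) : Matrix (Fin n) (Fin n) ℂ →ₗ[ℂ] (Fin n → ℂ) where
  toFun M := M.mulVec v
  map_add' M N := Matrix.add_mulVec M N v
  map_smul' c M := Matrix.smul_mulVec c M v

lemma eval_charpoly (B : Matrix (Fin n) (Fin n) ℂ) (μ : ℂ) :
    (Matrix.charpoly B).eval μ = Matrix.det (μ • (1 : Matrix (Fin n) (Fin n) ℂ) - B) := by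
  rw [Matrix.charpoly, ← Polynomial.coe_evalRingHom, RingHom.map_det]
  congr 1
  ext i j
  by_cases h : i = j
  · subst h
    simp [Matrix.charmatrix_apply_eq, Matrix.one_apply_eq]
  · simp [Matrix.charmatrix_apply_ne _ _ _ h, Matrix.one_apply_ne h]

lemma mem_spectrum_iff_root {B : Matrix (Fin n) (Fin n) ℂ} {μ : ℂ} :
    μ ∈ spectrum ℂ B ↔ (Matrix.charpoly B).IsRoot μ := by
  rw [spectrum.mem_iff, Matrix.isUnit_iff_isUnit_det, isUnit_iff_ne_zero, not_not,
    Polynomial.IsRoot.def, eval_charpoly]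
  congr! 3
  simp [Algebra.algebraMap_eq_smul_one]

lemma exists_eigenvector {B : Matrix (Fin n) (Fin n) ℂ} {μ : ℂ} (h : μ ∈ spectrum ℂ B) :
    ∃ v : Fin n → ℂ, v ≠ 0 ∧ B.mulVec v = μ • v := by
  rw [spectrum.mem_iff, Matrix.isUnit_iff_isUnit_det, isUnit_iff_ne_zero, not_not] at h
  obtain ⟨v, hv0, hv⟩ := (Matrix.exists_mulVec_eq_zero_iff).mpr h
  refine ⟨v, hv0, ?_⟩
  have : (algebraMap ℂ (Matrix (Fin n) (Fin n) ℂ) μ - B).mulVec v = 0 := hv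
  rw [Matrix.sub_mulVec, sub_eq_zero] at this
  rw [← this, Algebra.algebraMap_eq_smul_one, Matrix.smul_mulVec, Matrix.one_mulVec]


lemma pow_mulVec_eig {B : Matrix (Fin n) (Fin n) ℂ} {μ : ℂ} {v : Fin n → ℂ}
    (hv : B.mulVec v = μ • v) (k : ℕ) : (B ^ k).mulVec v = μ ^ k • v := by
  induction k with
  | zero => simp [Matrix.one_mulVec]
  | succ k ih =>
      rw [pow_succ', ← Matrix.mulVec_mulVec, ih, Matrix.mulVec_smul, hv, smul_smul, ← pow_succ]

lemma exp_mulVec {B : Matrix (Fin n) (Fin n) ℂ} {μ : ℂ} {v : Fin n → ℂ}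
    (hv : B.mulVec v = μ • v) : (exp B).mulVec v = Complex.exp μ • v := by
  haveI : CompleteSpace (Matrix (Fin n) (Fin n) ℂ) := FiniteDimensional.complete ℂ _
  have hL : Continuous (mulVecL v) := (mulVecL v).continuous_of_finiteDimensional
  let L : Matrix (Fin n) (Fin n) ℂ →L[ℂ] (Fin n → ℂ) := ⟨mulVecL v, hL⟩
  have hsum : Summable fun k : ℕ => ((k ! : ℂ))⁻¹ • B ^ k := expSeries_summable' B
  have h1 : (exp B).mulVec v = ∑' k : ℕ, ((k ! : ℂ))⁻¹ • μ ^ k • v := by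
    have hmt := L.map_tsum hsum
    rw [exp_eq_tsum ℂ]
    refine hmt.trans (tsum_congr fun k => ?_)
    show (mulVecL v) (((k ! : ℂ))⁻¹ • B ^ k) = _
    rw [_root_.map_smul]
    show ((k ! : ℂ))⁻¹ • (B ^ k).mulVec v = _
    rw [pow_mulVec_eig hv]
  rw [h1]
  have hsum2 : Summable fun k : ℕ => ((k ! : ℂ))⁻¹ • μ ^ k := expSeries_summable' μ
  calc ∑' k : ℕ, ((k ! : ℂ))⁻¹ • μ ^ k • v = ∑' k : ℕ, (((k ! : ℂ))⁻¹ * μ ^ k) • v := by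
        simp_rw [smul_smul]
    _ = (∑' k : ℕ, ((k ! : ℂ))⁻¹ * μ ^ k) • v := by
        rw [Summable.tsum_smul_const (by simpa [smul_eq_mul] using hsum2)]
    _ = Complex.exp μ • v := by
        rw [Complex.exp_eq_exp_ℂ, exp_eq_tsum ℂ]
        simp [smul_eq_mul]

lemma exp_mem_adjoin (B : Matrix (Fin n) (Fin n) ℂ) : exp B ∈ Algebra.adjoin ℂ {B} := by
  haveI : CompleteSpace (Matrix (Fin n) (Fin n) ℂ) := FiniteDimensional.complete ℂ _
  have hclosed : IsClosed (Algebra.adjoin ℂ {B} : Set (Matrix (Fin n) (Fin n) ℂ)) :=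
    (Subalgebra.toSubmodule (Algebra.adjoin ℂ {B})).closed_of_finiteDimensional
  have hsum : Summable fun k : ℕ => ((k ! : ℂ))⁻¹ • B ^ k := expSeries_summable' B
  rw [exp_eq_tsum ℂ]
  refine hclosed.mem_of_tendsto hsum.hasSum.tendsto_sum_nat ?_
  have hmem : ∀ m : ℕ, (∑ k ∈ Finset.range m, ((k ! : ℂ))⁻¹ • B ^ k) ∈
      Subalgebra.toSubmodule (Algebra.adjoin ℂ {B}) := fun m =>
    Submodule.sum_mem _ fun k _ =>
      Submodule.smul_mem _ _ (Subalgebra.pow_mem _ (Algebra.self_mem_adjoin_singleton ℂ B) k)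
  filter_upwards with m using hmem m

lemma spectrum_exp (B : Matrix (Fin n) (Fin n) ℂ) (hn : 0 < n) :
    spectrum ℂ (exp B) = Complex.exp '' spectrum ℂ B := by
  haveI : CompleteSpace (Matrix (Fin n) (Fin n) ℂ) := FiniteDimensional.complete ℂ _
  haveI : Nontrivial (Matrix (Fin n) (Fin n) ℂ) := by
    refine ⟨1, 0, fun h => ?_⟩
    have := congrFun (congrFun h ⟨0, hn⟩) ⟨0, hn⟩
    simp at this
  obtain ⟨p, hp⟩ := (Algebra.adjoin_singleton_eq_range_aeval ℂ B ▸ exp_mem_adjoin B : _)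
  have hp' : (Polynomial.aeval B) p = exp B := hp
  have hne : (spectrum ℂ B).Nonempty := spectrum.nonempty B
  have hmap := spectrum.map_polynomial_aeval_of_nonempty B p hne
  rw [hp'] at hmap
  rw [hmap]
  refine Set.image_congr ?_
  intro μ hμ
  obtain ⟨v, hv0, hv⟩ := exists_eigenvector hμ
  have h1 : (Polynomial.aeval B p).mulVec v = p.eval μ • v := by
    show mulVecL v (Polynomial.aeval B p) = _
    rw [Polynomial.aeval_eq_sum_range, _root_.map_sum, Polynomial.eval_eq_sum_range, Finset.sum_smul]
    refine Finset.sum_congr rfl fun i _ => ?_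
    rw [_root_.map_smul]
    show p.coeff i • (B ^ i).mulVec v = (p.coeff i * μ ^ i) • v
    rw [pow_mulVec_eig hv, smul_smul]
  rw [hp'] at h1
  have h2 : (exp B).mulVec v = Complex.exp μ • v := exp_mulVec hv
  have h3 : p.eval μ • v = Complex.exp μ • v := h1.symm.trans h2
  have h4 : (p.eval μ - Complex.exp μ) • v = 0 := by
    rw [sub_smul, h3, sub_self]
  rcases smul_eq_zero.mp h4 with h | h
  · exact (sub_eq_zero.mp h)
  · exact absurd h hv0

lemma entry_norm_le_frob {α : Type*} [SeminormedAddCommGroup α]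
    (M : Matrix (Fin n) (Fin n) α) (i j : Fin n) : ‖M i j‖ ≤ ‖M‖ := by
  have h : ‖M i j‖₊ ≤ ‖M‖₊ := by
    rw [Matrix.frobenius_nnnorm_def]
    have h1 : ‖M i j‖₊ ^ (2:ℝ) ≤ ∑ i', ∑ j', ‖M i' j'‖₊ ^ (2:ℝ) := by
      calc ‖M i j‖₊ ^ (2:ℝ) ≤ ∑ j', ‖M i j'‖₊ ^ (2:ℝ) :=
            Finset.single_le_sum (f := fun j' => ‖M i j'‖₊ ^ (2:ℝ))
              (fun _ _ => zero_le) (Finset.mem_univ j)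
        _ ≤ ∑ i', ∑ j', ‖M i' j'‖₊ ^ (2:ℝ) :=
            Finset.single_le_sum (f := fun i' => ∑ j', ‖M i' j'‖₊ ^ (2:ℝ))
              (fun _ _ => zero_le) (Finset.mem_univ i)
    calc ‖M i j‖₊ = (‖M i j‖₊ ^ (2:ℝ)) ^ (1/2:ℝ) := by
          rw [← NNReal.rpow_mul]; norm_num
      _ ≤ (∑ i', ∑ j', ‖M i' j'‖₊ ^ (2:ℝ)) ^ (1/2:ℝ) :=
          NNReal.rpow_le_rpow h1 (by norm_num)
  exact_mod_cast h

set_option maxHeartbeats 2000000 in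
lemma norm_exp_smul_le (B : Matrix (Fin n) (Fin n) ℂ) (hn : 0 < n)
    (hB : ∀ μ ∈ spectrum ℂ B, μ.re < 0) :
    ∃ C > 0, ∃ ε > 0, ∀ t : ℝ, 0 ≤ t → ‖exp (t • B)‖ ≤ C * Real.exp (-ε * t) := by
  haveI : CompleteSpace (Matrix (Fin n) (Fin n) ℂ) := FiniteDimensional.complete ℂ _
  haveI : Nontrivial (Matrix (Fin n) (Fin n) ℂ) := by
    refine ⟨1, 0, fun h => ?_⟩
    have := congrFun (congrFun h ⟨0, hn⟩) ⟨0, hn⟩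
    simp at this
  set E := exp B with hE
  have hrad : spectralRadius ℂ E < 1 := by
    have h1 : ∀ z ∈ spectrum ℂ E, ‖z‖₊ < (1:ℝ≥0) := by
      intro z hz
      rw [hE, spectrum_exp B hn] at hz
      obtain ⟨μ, hμ, rfl⟩ := hz
      have habs : ‖Complex.exp μ‖ = Real.exp μ.re := Complex.norm_exp μ
      have : Real.exp μ.re < 1 := Real.exp_lt_one_iff.mpr (hB μ hμ)
      rw [← NNReal.coe_lt_coe, coe_nnnorm, habs]
      exact this
    have h2 := spectrum.spectralRadius_lt_of_forall_lt (a := E) h1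
    simpa using h2
  obtain ⟨ρ, hρ1, hρ2⟩ := ENNReal.lt_iff_exists_nnreal_btwn.mp hrad
  have hρpos : 0 < ρ := by
    rcases eq_or_lt_of_le (zero_le : (0:ℝ≥0) ≤ ρ) with h | h
    · rw [← h] at hρ1; simp at hρ1
    · exact h
  have hρposR : (0:ℝ) < (ρ:ℝ) := hρpos
  have hρlt1 : (ρ:ℝ) < 1 := by exact_mod_cast hρ2
  have hgel := spectrum.pow_nnnorm_pow_one_div_tendsto_nhds_spectralRadius E
  have hev : ∀ᶠ m : ℕ in atTop, (‖E ^ m‖₊ : ℝ≥0∞) ^ (1/(m:ℝ)) < (ρ : ℝ≥0∞) :=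
    hgel.eventually_lt_const hρ1
  rw [Filter.eventually_atTop] at hev
  obtain ⟨N, hN⟩ := hev
  have hpow : ∀ m : ℕ, N ≤ m → 1 ≤ m → ‖E ^ m‖ ≤ (ρ:ℝ) ^ m := by
    intro m hm hm1
    have hx := hN m hm
    have hm0 : (m:ℝ) ≠ 0 := by positivity
    have hxx : (‖E ^ m‖₊ : ℝ≥0∞) = ((‖E ^ m‖₊ : ℝ≥0∞) ^ (1/(m:ℝ))) ^ (m:ℝ) := by
      rw [← ENNReal.rpow_mul, one_div, inv_mul_cancel₀ hm0, ENNReal.rpow_one]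
    have h2 : (‖E ^ m‖₊ : ℝ≥0∞) ≤ (ρ : ℝ≥0∞) ^ (m:ℝ) := by
      rw [hxx]
      exact ENNReal.rpow_le_rpow hx.le (Nat.cast_nonneg m)
    have h3 : (‖E ^ m‖₊ : ℝ≥0∞) ≤ ((ρ ^ m : ℝ≥0) : ℝ≥0∞) := by
      rw [ENNReal.coe_pow, ← ENNReal.rpow_natCast]
      exact h2
    have h4 : ‖E ^ m‖₊ ≤ ρ ^ m := by exact_mod_cast h3
    calc ‖E ^ m‖ = ((‖E ^ m‖₊ : ℝ≥0) : ℝ) := rfl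
      _ ≤ ((ρ ^ m : ℝ≥0) : ℝ) := by exact_mod_cast h4
      _ = (ρ:ℝ) ^ m := by push_cast; ring
  set C₀ : ℝ := 1 + ∑ k ∈ Finset.range (N+1), ‖E ^ k‖ / (ρ:ℝ) ^ k with hC₀
  have hC₀one : (1:ℝ) ≤ C₀ := by
    rw [hC₀]
    have : 0 ≤ ∑ k ∈ Finset.range (N+1), ‖E ^ k‖ / (ρ:ℝ) ^ k :=
      Finset.sum_nonneg fun k _ => by positivity
    linarith
  have key : ∀ m : ℕ, ‖E ^ m‖ ≤ C₀ * (ρ:ℝ) ^ m := by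
    intro m
    rcases le_or_gt m N with hm | hm
    · have h1 : ‖E ^ m‖ / (ρ:ℝ) ^ m ≤ ∑ k ∈ Finset.range (N+1), ‖E ^ k‖ / (ρ:ℝ) ^ k :=
        Finset.single_le_sum (f := fun k => ‖E ^ k‖ / (ρ:ℝ) ^ k)
          (fun k _ => by positivity) (Finset.mem_range.mpr (Nat.lt_succ_of_le hm))
      have h2 : ‖E ^ m‖ / (ρ:ℝ) ^ m ≤ C₀ := by rw [hC₀]; linarith
      calc ‖E ^ m‖ = ‖E ^ m‖ / (ρ:ℝ) ^ m * (ρ:ℝ) ^ m := by field_simp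
        _ ≤ C₀ * (ρ:ℝ) ^ m := by
            exact mul_le_mul_of_nonneg_right h2 (by positivity)
    · calc ‖E ^ m‖ ≤ (ρ:ℝ) ^ m := hpow m (le_of_lt hm) (le_trans (Nat.succ_le_succ (Nat.zero_le N)) hm)
        _ ≤ C₀ * (ρ:ℝ) ^ m := le_mul_of_one_le_left (by positivity) hC₀one
  -- bound on [0,1]
  have hcont : Continuous fun s : ℝ => ‖exp (s • B)‖ :=
    (exp_continuous.comp (continuous_id.smul continuous_const)).norm
  obtain ⟨s₀, hs₀mem, hs₀'⟩ := isCompact_Icc.exists_isMaxOn (Set.nonempty_Icc.mpr zero_le_one)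
    hcont.continuousOn
  set M : ℝ := ‖exp (s₀ • B)‖ with hM
  have hs₀ : ∀ x ∈ Set.Icc (0:ℝ) 1, ‖exp (x • B)‖ ≤ M := fun x hx => hs₀' hx
  have hMpos : 0 < M := by
    have h0 : ‖exp ((0:ℝ) • B)‖ ≤ M := hs₀ 0 (Set.mem_Icc.mpr ⟨le_refl 0, zero_le_one⟩)
    have : ‖exp ((0:ℝ) • B)‖ = ‖(1 : Matrix (Fin n) (Fin n) ℂ)‖ := by
      rw [zero_smul, exp_zero]
    rw [this] at h0
    have h1 : (0:ℝ) < ‖(1 : Matrix (Fin n) (Fin n) ℂ)‖ :=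
      norm_pos_iff.mpr one_ne_zero
    linarith
  have hlog : Real.log (ρ:ℝ) < 0 := Real.log_neg hρposR hρlt1
  have hC₀pos : (0:ℝ) < C₀ := lt_of_lt_of_le one_pos hC₀one
  refine ⟨C₀ * M / (ρ:ℝ), div_pos (mul_pos hC₀pos hMpos) hρposR,
    -Real.log (ρ:ℝ), neg_pos.mpr hlog, ?_⟩
  intro t ht
  set m : ℕ := ⌊t⌋₊ with hm
  have hmle : (m:ℝ) ≤ t := Nat.floor_le ht
  have htlt : t < (m:ℝ) + 1 := Nat.lt_floor_add_one t
  set s : ℝ := t - m with hs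
  have hs0 : 0 ≤ s := by rw [hs]; linarith
  have hs1 : s ≤ 1 := by rw [hs]; linarith
  have hsplit : exp (t • B) = E ^ m * exp (s • B) := by
    have hcomm : Commute ((m:ℝ) • B) (s • B) :=
      ((Commute.refl B).smul_left (m:ℝ)).smul_right s
    have : t • B = (m:ℝ) • B + s • B := by
      rw [← add_smul]; congr 1; rw [hs]; ring
    rw [this, Matrix.exp_add_of_commute _ _ hcomm]
    congr 1
    rw [show ((m:ℝ) • B) = (m • B : Matrix (Fin n) (Fin n) ℂ) from
      (Nat.cast_smul_eq_nsmul ℝ m B), Matrix.exp_nsmul]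
  have hnorm1 : ‖exp (s • B)‖ ≤ M := hs₀ s (Set.mem_Icc.mpr ⟨hs0, hs1⟩)
  have hρm : (ρ:ℝ) ^ m ≤ Real.exp ((t-1) * Real.log (ρ:ℝ)) := by
    have h1 : (ρ:ℝ) ^ m = Real.exp ((m:ℝ) * Real.log (ρ:ℝ)) := by
      rw [← Real.exp_log hρposR, ← Real.exp_nat_mul, Real.log_exp]
    rw [h1]
    apply Real.exp_le_exp.mpr
    have : t - 1 ≤ (m:ℝ) := by linarith
    nlinarith [hlog, this]
  calc ‖exp (t • B)‖ ≤ ‖E ^ m‖ * ‖exp (s • B)‖ := by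
        rw [hsplit]; exact norm_mul_le _ _
    _ ≤ (C₀ * (ρ:ℝ) ^ m) * M := by
        exact mul_le_mul (key m) hnorm1 (norm_nonneg _) (mul_nonneg hC₀pos.le (pow_nonneg hρposR.le m))
    _ ≤ (C₀ * Real.exp ((t-1) * Real.log (ρ:ℝ))) * M := by
        have := mul_le_mul_of_nonneg_left hρm (le_trans zero_le_one hC₀one)
        exact mul_le_mul_of_nonneg_right this (le_of_lt hMpos)
    _ = C₀ * M / (ρ:ℝ) * Real.exp (-(-Real.log (ρ:ℝ)) * t) := by
        rw [show (t-1) * Real.log (ρ:ℝ) = -(-Real.log (ρ:ℝ)) * t + (- Real.log (ρ:ℝ)) by ring,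
          Real.exp_add, Real.exp_neg, Real.exp_log hρposR]
        ring
  
/-- entry of a matrix as a linear map -/
noncomputable def entryL (i j : Fin n) : Matrix (Fin n) (Fin n) ℝ →ₗ[ℝ] ℝ where
  toFun M := M i j
  map_add' _ _ := rfl
  map_smul' _ _ := rfl

lemma map_exp_ofReal (A : Matrix (Fin n) (Fin n) ℝ) :
    (exp A).map Complex.ofReal = exp (A.map Complex.ofReal) := by
  haveI : CompleteSpace (Matrix (Fin n) (Fin n) ℝ) := FiniteDimensional.complete ℝ _
  haveI : CompleteSpace (Matrix (Fin n) (Fin n) ℂ) := FiniteDimensional.complete ℝ _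
  set Φ : Matrix (Fin n) (Fin n) ℝ →ₐ[ℝ] Matrix (Fin n) (Fin n) ℂ :=
    (Complex.ofRealAm).mapMatrix with hΦdef
  have hΦ : Continuous Φ := Φ.toLinearMap.continuous_of_finiteDimensional
  have h1 : Φ (exp A) = exp (Φ A) := map_exp Φ hΦ A
  have h2 : (exp : Matrix (Fin n) (Fin n) ℂ → _) = exp :=
    rfl
  have h3 : Φ A = A.map Complex.ofReal := by
    simp [hΦdef, AlgHom.mapMatrix_apply]
  have h4 : Φ (exp A) = (exp A).map Complex.ofReal := by
    simp [hΦdef, AlgHom.mapMatrix_apply]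
  rw [← h4, h1, h3, h2]

end LyapAux

open LyapAux in
lemma entry_exp_decay {n : ℕ} (A : Matrix (Fin n) (Fin n) ℝ)
    (hA : ∀ μ ∈ spectrum ℂ (A.map Complex.ofReal), μ.re < 0) :
    ∃ C > 0, ∃ ε > 0, ∀ t : ℝ, 0 ≤ t →
      ∀ i j : Fin n, |(exp (t • A)) i j| ≤ C * Real.exp (-ε * t) := by
  rcases Nat.eq_zero_or_pos n with h0 | hn
  · subst h0
    exact ⟨1, one_pos, 1, one_pos, fun t ht i j => i.elim0⟩
  letI : SeminormedAddCommGroup (Matrix (Fin n) (Fin n) ℂ) :=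
    Matrix.frobeniusSeminormedAddCommGroup
  letI : NormedAddCommGroup (Matrix (Fin n) (Fin n) ℂ) := Matrix.frobeniusNormedAddCommGroup
  letI : NormedRing (Matrix (Fin n) (Fin n) ℂ) := Matrix.frobeniusNormedRing
  letI : NormedAlgebra ℂ (Matrix (Fin n) (Fin n) ℂ) := Matrix.frobeniusNormedAlgebra
  obtain ⟨C, hC, ε, hε, hbd⟩ := norm_exp_smul_le (A.map Complex.ofReal) hn hA
  refine ⟨C, hC, ε, hε, fun t ht i j => ?_⟩
  have hmap : (exp (t • A)).map Complex.ofReal = exp (t • A.map Complex.ofReal) := by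
    rw [map_exp_ofReal, Matrix.map_smul Complex.ofReal t (fun a => by simp [Complex.real_smul]) A]
  have habs : |(exp (t • A)) i j| = ‖(exp (t • A.map Complex.ofReal)) i j‖ := by
    rw [← hmap]
    simp [Matrix.map_apply, Complex.norm_real]
  rw [habs]
  exact (entry_norm_le_frob _ i j).trans (hbd t ht)

lemma entry_prod_bound {n : ℕ} (M R N : Matrix (Fin n) (Fin n) ℝ) (c : ℝ)
    (hM : ∀ i j, |M i j| ≤ c) (hN : ∀ i j, |N i j| ≤ c) (i j : Fin n) :
    |(M * R * N) i j| ≤ (∑ k, ∑ l, |R k l|) * c ^ 2 := by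
  have hc : 0 ≤ c := le_trans (abs_nonneg _) (hM i i)
  have hexp : (M * R * N) i j = ∑ l, ∑ k, M i k * R k l * N l j := by
    simp only [Matrix.mul_apply, Finset.sum_mul]
  rw [hexp]
  calc |∑ l, ∑ k, M i k * R k l * N l j| ≤ ∑ l, ∑ k, |M i k * R k l * N l j| :=
        le_trans (Finset.abs_sum_le_sum_abs _ _)
          (Finset.sum_le_sum fun l _ => Finset.abs_sum_le_sum_abs _ _)
    _ ≤ ∑ l, ∑ k, |R k l| * c ^ 2 := by
        refine Finset.sum_le_sum fun l _ => Finset.sum_le_sum fun k _ => ?_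
        rw [abs_mul, abs_mul]
        calc |M i k| * |R k l| * |N l j| ≤ c * |R k l| * c := by
              apply mul_le_mul (mul_le_mul (hM i k) (le_refl _) (abs_nonneg _) hc)
                (hN l j) (abs_nonneg _) (mul_nonneg hc (abs_nonneg _))
          _ = |R k l| * c ^ 2 := by ring
    _ = (∑ k, ∑ l, |R k l|) * c ^ 2 := by
        rw [Finset.sum_comm, Finset.sum_mul]
        exact Finset.sum_congr rfl fun k _ => (Finset.sum_mul _ _ _).symm

set_option maxHeartbeats 1000000 in
/-- If `A` is Hurwitz and `Q` is symmetric positive semidefinite, then the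
unique solution `P` of the Lyapunov equation `P·A + Aᵀ·P + Q = 0` is given (entrywise) by the
convergent integral `∫₀^∞ exp(Aᵀ t) Q exp(A t) dt`. -/
theorem lyapunov_solution_integral {n : ℕ} (A Q P : Matrix (Fin n) (Fin n) ℝ)
    (hHurwitz : ∀ μ ∈ (A.map (Complex.ofReal)).charpoly.roots, μ.re < 0)
    (hQ : Q.PosSemidef)
    (hP : P * A + Aᵀ * P + Q = 0) :
    (∀ i j : Fin n, IntegrableOn
        (fun t : ℝ => (NormedSpace.exp (t • Aᵀ) * Q * NormedSpace.exp (t • A)) i j) (Set.Ioi 0)) ∧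
    (∀ i j : Fin n,
        P i j = ∫ t in Set.Ioi (0 : ℝ), (NormedSpace.exp (t • Aᵀ) * Q * NormedSpace.exp (t • A)) i j) := by
  have hspec : ∀ μ ∈ spectrum ℂ (A.map Complex.ofReal), μ.re < 0 := by
    intro μ hμ
    refine hHurwitz μ ?_
    rw [Polynomial.mem_roots']
    exact ⟨(Matrix.charpoly_monic _).ne_zero, LyapAux.mem_spectrum_iff_root.mp hμ⟩
  obtain ⟨C, hC, ε, hε, hbd⟩ := entry_exp_decay A hspec
  have hbdT : ∀ t : ℝ, 0 ≤ t → ∀ i j, |(exp (t • Aᵀ)) i j| ≤ C * Real.exp (-ε * t) := by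
    intro t ht i j
    rw [show t • Aᵀ = (t • A)ᵀ from (Matrix.transpose_smul t A).symm, Matrix.exp_transpose]
    exact hbd t ht j i
  -- generic bound for entries of exp(t•Aᵀ) * R * exp(t•A)
  have hgen : ∀ R : Matrix (Fin n) (Fin n) ℝ, ∀ t : ℝ, 0 ≤ t → ∀ i j : Fin n,
      |(exp (t • Aᵀ) * R * exp (t • A)) i j| ≤
        ((∑ k, ∑ l, |R k l|) * C ^ 2) * Real.exp (-(2 * ε) * t) := by
    intro R t ht i j
    have h := entry_prod_bound (exp (t • Aᵀ)) R (exp (t • A)) (C * Real.exp (-ε * t))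
      (fun i j => hbdT t ht i j) (fun i j => hbd t ht i j) i j
    refine h.trans (le_of_eq ?_)
    have h2 : Real.exp (-ε * t) ^ 2 = Real.exp (-(2 * ε) * t) := by
      rw [pow_two, ← Real.exp_add]; congr 1; ring
    rw [mul_pow, h2]; ring
  letI : SeminormedAddCommGroup (Matrix (Fin n) (Fin n) ℝ) :=
    Matrix.frobeniusSeminormedAddCommGroup
  letI : NormedAddCommGroup (Matrix (Fin n) (Fin n) ℝ) := Matrix.frobeniusNormedAddCommGroup
  letI : NormedRing (Matrix (Fin n) (Fin n) ℝ) := Matrix.frobeniusNormedRing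
  letI : NormedAlgebra ℝ (Matrix (Fin n) (Fin n) ℝ) := Matrix.frobeniusNormedAlgebra
  letI : NormedAlgebra ℚ (Matrix (Fin n) (Fin n) ℝ) := Matrix.frobeniusNormedAlgebra
  haveI : CompleteSpace (Matrix (Fin n) (Fin n) ℝ) := FiniteDimensional.complete ℝ _
  have hexpc : ∀ B : Matrix (Fin n) (Fin n) ℝ, Continuous fun t : ℝ => exp (t • B) :=
    fun B => exp_continuous.comp (continuous_id.smul continuous_const)
  have hcontF : ∀ R : Matrix (Fin n) (Fin n) ℝ, ∀ i j : Fin n,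
      Continuous fun t : ℝ => (exp (t • Aᵀ) * R * exp (t • A)) i j := by
    intro R i j
    have h1 : Continuous fun t : ℝ => exp (t • Aᵀ) * R * exp (t • A) :=
      ((hexpc Aᵀ).mul continuous_const).mul (hexpc A)
    exact ((LyapAux.entryL i j).toContinuousLinearMap.continuous.comp h1 : _)
  have h2ε : (0:ℝ) < 2 * ε := by linarith
  have hint : ∀ i j : Fin n, IntegrableOn
      (fun t : ℝ => (exp (t • Aᵀ) * Q * exp (t • A)) i j) (Set.Ioi 0) := by
    intro i j
    refine Integrable.mono'
      ((exp_neg_integrableOn_Ioi 0 h2ε).const_mul ((∑ k, ∑ l, |Q k l|) * C ^ 2))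
      ((hcontF Q i j).aestronglyMeasurable.restrict) ?_
    refine (ae_restrict_iff' measurableSet_Ioi).mpr (ae_of_all _ fun t ht => ?_)
    have h := hgen Q t (le_of_lt ht) i j
    simpa [Real.norm_eq_abs] using h
  refine ⟨hint, ?_⟩
  intro i j
  set g : ℝ → Matrix (Fin n) (Fin n) ℝ := fun t => exp (t • Aᵀ) * P * exp (t • A) with hg
  have hQ2 : Q = -(Aᵀ * P + P * A) := by
    have h2 : P * A + Aᵀ * P = -Q := eq_neg_of_add_eq_zero_left hP
    rw [add_comm] at h2
    rw [h2, neg_neg]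
  have hderiv : ∀ t : ℝ, HasDerivAt g (-(exp (t • Aᵀ) * Q * exp (t • A))) t := by
    intro t
    have h1 : HasDerivAt (fun u : ℝ => exp (u • Aᵀ)) (Aᵀ * exp (t • Aᵀ)) t :=
      hasDerivAt_exp_smul_const' Aᵀ t
    have h2 : HasDerivAt (fun u : ℝ => exp (u • A)) (exp (t • A) * A) t :=
      hasDerivAt_exp_smul_const A t
    have h3 := (h1.mul_const P).mul h2
    refine h3.congr_deriv ?_
    have hMA : Aᵀ * exp (t • Aᵀ) = exp (t • Aᵀ) * Aᵀ :=
      (((Commute.refl Aᵀ).smul_right t).exp_right).eq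
    have hNA : exp (t • A) * A = A * exp (t • A) :=
      ((((Commute.refl A).smul_right t).exp_right).eq).symm
    rw [hQ2, hMA, hNA]
    noncomm_ring
  have hderivE : ∀ x ∈ Set.Ici (0:ℝ), HasDerivAt (fun t => -(g t i j))
      ((exp (x • Aᵀ) * Q * exp (x • A)) i j) x := by
    intro x _
    have hE := ((LyapAux.entryL (n := n) i j).toContinuousLinearMap.hasFDerivAt
      (x := g x)).comp_hasDerivAt x (hderiv x)
    have hE2 := hE.neg
    refine hE2.congr_deriv ?_
    show -((-(exp (x • Aᵀ) * Q * exp (x • A))) i j) = (exp (x • Aᵀ) * Q * exp (x • A)) i j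
    simp
  have htend0 : Tendsto (fun t => g t i j) atTop (𝓝 0) := by
    have hb : ∀ᶠ t in atTop, ‖g t i j‖ ≤ ((∑ k, ∑ l, |P k l|) * C ^ 2) * Real.exp (-(2*ε) * t) := by
      filter_upwards [eventually_ge_atTop (0:ℝ)] with t ht
      simpa [Real.norm_eq_abs] using hgen P t ht i j
    have hexp0 : Tendsto (fun t : ℝ => ((∑ k, ∑ l, |P k l|) * C ^ 2) * Real.exp (-(2*ε) * t))
        atTop (𝓝 0) := by
      have h1 : Tendsto (fun t : ℝ => -(2*ε) * t) atTop atBot :=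
        Filter.Tendsto.const_mul_atTop_of_neg (by linarith) tendsto_id
      have h2 : Tendsto (fun t : ℝ => Real.exp (-(2*ε) * t)) atTop (𝓝 0) :=
        Real.tendsto_exp_atBot.comp h1
      simpa using h2.const_mul ((∑ k, ∑ l, |P k l|) * C ^ 2)
    exact squeeze_zero_norm' hb hexp0
  have htend : Tendsto (fun t => -(g t i j)) atTop (𝓝 0) := by
    simpa using htend0.neg
  have hfund := MeasureTheory.integral_Ioi_of_hasDerivAt_of_tendsto' hderivE (hint i j) htend
  have hg0 : g 0 i j = P i j := by
    rw [hg]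
    simp [exp_zero]
  rw [hfund, hg0]
  ring
end

section
/- If A is an n×n real normal Hurwitz matrix and Q = q·I with q > 0, then the unique solution P of PA + AᵀP + Q = 0 satisfies trace(P) = -∑_{i=1}^n q / (2·Re(λ_i(A))) = -∑_{i=1}^n q / (2·λ_i(A_s)), where A_s = (A + Aᵀ)/2. -/
open Matrix
open Polynomial Finset
open scoped ComplexOrder

section Helpers2
variable {n : Type*} [Fintype n] [DecidableEq n]

variable {R : Type*} [CommRing R]

lemma charpoly_conj_unit (u : (Matrix n n R)ˣ) (M : Matrix n n R) :
    ((u : Matrix n n R) * M * (↑u⁻¹ : Matrix n n R)).charpoly = M.charpoly := by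
  let f : Matrix n n R →+* Matrix n n R[X] := (RingHom.mapMatrix (C : R →+* R[X]))
  have huu : (f ↑u) * (f ↑u⁻¹) = 1 := by rw [← RingHom.map_mul]; simp [f]
  have huu' : (f ↑u⁻¹) * (f ↑u) = 1 := by rw [← RingHom.map_mul]; simp [f]
  have hsc : ∀ N : Matrix n n R[X], (scalar n X) * N = N * scalar n X :=
    fun N => (scalar_commute X (fun r => Commute.all X r) N).eq
  have key : charmatrix ((u : Matrix n n R) * M * (↑u⁻¹ : Matrix n n R)) =
      (f ↑u) * charmatrix M * (f ↑u⁻¹) := by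
    have h1 : (RingHom.mapMatrix (C : R →+* R[X])) ((u : Matrix n n R) * M * (↑u⁻¹ : Matrix n n R))
        = f ↑u * f M * f ↑u⁻¹ := by simp [f]
    rw [charmatrix, charmatrix, h1, mul_sub, sub_mul, ← hsc, mul_assoc (scalar n X), huu, mul_one]
  rw [Matrix.charpoly, key, Matrix.charpoly, det_mul, det_mul, mul_comm, ← mul_assoc, ← det_mul,
    huu', det_one, one_mul]


variable {n : Type*} [Fintype n] [DecidableEq n]

lemma eval_charpoly' {K : Type*} [Field K] (M : Matrix n n K) (μ : K) :
    M.charpoly.eval μ = (Matrix.diagonal (fun _ => μ) - M).det := by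
  rw [Matrix.charpoly, ← Polynomial.coe_evalRingHom, RingHom.map_det]
  congr 1
  ext i j
  by_cases h : i = j
  · subst h; simp [charmatrix_apply_eq]
  · simp [charmatrix_apply_ne _ _ _ h, Matrix.diagonal_apply_ne _ h]

lemma exists_eigvec {K : Type*} [Field K] (M : Matrix n n K) (μ : K)
    (h : M.charpoly.IsRoot μ) : ∃ x : n → K, x ≠ 0 ∧ M.mulVec x = μ • x := by
  rw [Polynomial.IsRoot, eval_charpoly'] at h
  obtain ⟨x, hx, hx0⟩ := (Matrix.exists_mulVec_eq_zero_iff).2 h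
  refine ⟨x, hx, ?_⟩
  have h1 := sub_mulVec (Matrix.diagonal (fun _ => μ)) M x
  rw [hx0] at h1
  have h2 : (Matrix.diagonal (fun _ => μ)) *ᵥ x = μ • x := by
    ext i; simp [mulVec_diagonal]
  rw [h2] at h1
  have := sub_eq_zero.mp h1.symm
  exact this.symm ▸ rfl

lemma re_eq_of_herm_part {C : Matrix n n ℂ} {v : ℝ}
    (hC : C + Cᴴ = ((2 * v : ℝ) : ℂ) • 1) {μ : ℂ} (h : C.charpoly.IsRoot μ) :
    μ.re = v := by
  obtain ⟨x, hx0, hx⟩ := exists_eigvec C μ h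
  have hd : (star x) ⬝ᵥ x ≠ 0 := fun hc => hx0 (dotProduct_star_self_eq_zero.mp hc)
  have hself : star (star x ⬝ᵥ x) = star x ⬝ᵥ x := (star_dotProduct x x).symm
  have h1 : star x ⬝ᵥ (C *ᵥ x) = μ * (star x ⬝ᵥ x) := by
    rw [hx, dotProduct_smul]; simp
  have h2 : star x ⬝ᵥ (Cᴴ *ᵥ x) = (starRingEnd ℂ) μ * (star x ⬝ᵥ x) := by
    have e1 : star x ⬝ᵥ (Cᴴ *ᵥ x) = star (star (Cᴴ *ᵥ x) ⬝ᵥ x) := star_dotProduct _ _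
    rw [star_mulVec, conjTranspose_conjTranspose, ← dotProduct_mulVec, h1] at e1
    rw [e1, star_mul', hself]
    rfl
  have h3 : star x ⬝ᵥ ((C + Cᴴ) *ᵥ x) = (μ + (starRingEnd ℂ) μ) * (star x ⬝ᵥ x) := by
    rw [add_mulVec, dotProduct_add, h1, h2, add_mul]
  rw [hC, smul_mulVec, one_mulVec, dotProduct_smul, smul_eq_mul] at h3
  have h6 : ((2*v:ℝ):ℂ) = μ + (starRingEnd ℂ) μ := mul_right_cancel₀ hd h3
  rw [Complex.add_conj] at h6
  have : (2*v : ℝ) = 2 * μ.re := by exact_mod_cast h6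
  linarith

lemma roots_re_eq (B : Matrix n n ℂ) (ν : n → ℝ)
    (hB : B + Bᴴ = (2 : ℂ) • diagonal (fun i => (ν i : ℂ)))
    (hcomm : Bᴴ * B = B * Bᴴ) :
    B.charpoly.roots.map Complex.re = Finset.univ.val.map ν := by
  set D : Matrix n n ℂ := diagonal (fun i => (ν i : ℂ)) with hD
  -- B commutes with D
  have hBD : B * D = D * B := by
    have hBH : Bᴴ = (2 : ℂ) • D - B := by rw [← hB]; abel
    have e := hcomm
    rw [hBH, sub_mul, mul_sub, smul_mul_assoc, mul_smul_comm] at e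
    have h4 : (2:ℂ) • (D * B) = (2:ℂ) • (B * D) := by
      have := congrArg (fun M => M + B * B) e
      simpa [sub_add_cancel] using this
    exact (smul_right_injective (Matrix n n ℂ) (two_ne_zero (α := ℂ)) h4).symm
  -- off-block entries vanish
  have hzero : ∀ i j, ν i ≠ ν j → B i j = 0 := by
    intro i j hij
    have h1 : (B * D) i j = B i j * (ν j : ℂ) := mul_diagonal _ _ _ _
    have h2 : (D * B) i j = (ν i : ℂ) * B i j := diagonal_mul _ _ _ _
    have h3 : B i j * (ν j : ℂ) = (ν i : ℂ) * B i j := by rw [← h1, ← h2, hBD]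
    have h4 : B i j * ((ν j : ℂ) - (ν i : ℂ)) = 0 := by ring_nf; linear_combination h3
    rcases mul_eq_zero.mp h4 with h | h
    · exact h
    · exfalso; apply hij; have := sub_eq_zero.mp h
      exact_mod_cast (Complex.ofReal_inj.mp this).symm
  have hBT : B.BlockTriangular ν := fun i j hij => hzero i j hij.ne'
  rw [hBT.charpoly]
  have hmonic : ∀ a ∈ image ν univ, (B.toSquareBlock ν a).charpoly ≠ 0 :=
    fun a _ => (Matrix.charpoly_monic _).ne_zero
  rw [Polynomial.roots_prod _ _ (prod_ne_zero_iff.mpr hmonic), Multiset.map_bind]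
  -- blocks
  have hblock : ∀ a ∈ image ν univ,
      ((B.toSquareBlock ν a).charpoly.roots.map Complex.re)
        = Multiset.replicate (Fintype.card {i // ν i = a}) a := by
    intro a _
    set C := B.toSquareBlock ν a with hC
    have hCH : C + Cᴴ = ((2 * a : ℝ) : ℂ) • 1 := by
      ext i j
      have hBij : (B + Bᴴ) (i : n) (j : n) = ((2:ℂ) • D) (i : n) (j : n) := by rw [hB]
      simp only [Matrix.add_apply, conjTranspose_apply, Matrix.smul_apply, hD] at hBij
      by_cases h : i = j
      · subst h
        simp only [Matrix.add_apply, conjTranspose_apply, Matrix.smul_apply, one_apply_eq, hC,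
          toSquareBlock_def, of_apply, smul_eq_mul, mul_one]
        simp only [diagonal_apply_eq, smul_eq_mul] at hBij
        rw [hBij, i.prop]
        push_cast
        ring
      · have hne : (i : n) ≠ (j : n) := fun hc => h (Subtype.ext hc)
        simp only [Matrix.add_apply, conjTranspose_apply, hC, toSquareBlock_def, of_apply,
          Matrix.smul_apply, one_apply_ne h, smul_eq_mul, mul_zero]
        rw [diagonal_apply_ne _ hne] at hBij
        simpa using hBij
    have hcard : C.charpoly.roots.card = Fintype.card {i // ν i = a} := by
      rw [← Matrix.charpoly_natDegree_eq_dim C]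
      exact (Polynomial.splits_iff_card_roots.mp (IsAlgClosed.splits _))
    rw [Multiset.eq_replicate]
    constructor
    · rw [Multiset.card_map]; exact hcard
    · intro b hb
      obtain ⟨μ, hμ, rfl⟩ := Multiset.mem_map.mp hb
      exact re_eq_of_herm_part hCH (Polynomial.isRoot_of_mem_roots hμ)
  rw [Multiset.bind_congr (fun a ha => hblock a ha)]
  -- final multiset identity
  refine Multiset.ext.mpr fun r => ?_
  rw [Multiset.count_bind, Multiset.count_map]
  have hrep : ∀ a : ℝ, Multiset.count r (Multiset.replicate (Fintype.card {i // ν i = a}) a)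
      = if a = r then Fintype.card {i // ν i = a} else 0 := fun a => Multiset.count_replicate _ _ _
  simp only [hrep]
  have hsum : ((image ν univ).val.map
        (fun a => if a = r then Fintype.card {i // ν i = a} else 0)).sum
      = ∑ a ∈ image ν univ, (if a = r then Fintype.card {i // ν i = a} else 0) := rfl
  rw [hsum, Finset.sum_ite_eq']
  by_cases hr : r ∈ image ν univ
  · rw [if_pos hr, Fintype.card_subtype]
    rw [Finset.card_def, Finset.filter_val]
    congr 1
    apply Multiset.filter_congr
    intro i _
    exact ⟨fun h => h.symm, fun h => h.symm⟩
  · rw [if_neg hr]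
    symm
    rw [Multiset.card_eq_zero, Multiset.filter_eq_nil]
    intro i _ hc
    exact hr (hc ▸ Finset.mem_image_of_mem ν (Finset.mem_univ i))

end Helpers2

section Helpers
variable {m : Type*} [Fintype m] [DecidableEq m]

lemma conjTranspose_map_ofReal (M : Matrix m m ℝ) :
    (M.map Complex.ofReal)ᴴ = Mᵀ.map Complex.ofReal := by
  ext i j
  simp [conjTranspose_apply, Complex.conj_ofReal]

lemma map_ofReal_mul (M N : Matrix m m ℝ) :
    ((M * N).map Complex.ofReal) = M.map Complex.ofReal * N.map Complex.ofReal := by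
  ext i j
  simp [Matrix.mul_apply]

lemma charpoly_conj' {R : Type*} [CommRing R] (V W M : Matrix m m R)
    (h1 : V * W = 1) (h2 : W * V = 1) : (V * M * W).charpoly = M.charpoly :=
  charpoly_conj_unit ⟨V, W, h1, h2⟩ M

end Helpers


/-- For `A` normal and Hurwitz and `Q = q·I` with `q > 0`, the unique
solution `P` of `P·A + Aᵀ·P + q·I = 0` satisfies
`trace(P) = -∑ᵢ q/(2 Re λᵢ(A)) = -∑ᵢ q/(2 λᵢ(A_s))`, `A_s = (A + Aᵀ)/2`. -/
theorem trace_lyapunov_normal {n : ℕ} (A P : Matrix (Fin n) (Fin n) ℝ) (q : ℝ) (hq : 0 < q)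
    (hNormal : Aᵀ * A = A * Aᵀ)
    (hHurwitz : ∀ μ ∈ (A.map (Complex.ofReal)).charpoly.roots, μ.re < 0)
    (hP : P * A + Aᵀ * P + q • (1 : Matrix (Fin n) (Fin n) ℝ) = 0) :
    P.trace =
        -((A.map (Complex.ofReal)).charpoly.roots.map (fun μ => q / (2 * μ.re))).sum ∧
    P.trace =
        -((((2 : ℝ)⁻¹ • (A + Aᵀ)).charpoly.roots.map (fun ν => q / (2 * ν))).sum) := by
  classical
  set S : Matrix (Fin n) (Fin n) ℝ := (2 : ℝ)⁻¹ • (A + Aᵀ) with hSdef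
  have hS : S.IsHermitian := by
    show Sᴴ = S
    ext i j
    simp [hSdef, conjTranspose_apply, transpose_apply, add_comm]
  set ν : Fin n → ℝ := hS.eigenvalues with hν
  set U : Matrix (Fin n) (Fin n) ℝ := (hS.eigenvectorUnitary : Matrix (Fin n) (Fin n) ℝ) with hU
  have hUU : star U * U = 1 := Unitary.coe_star_mul_self _
  have hUU' : U * star U = 1 := Unitary.coe_mul_star_self _
  have hspec : S = U * diagonal ν * star U := by
    have := hS.spectral_theorem
    simpa [hU, hν] using this
  -- twice S
  have h2S : A + Aᵀ = (2 : ℝ) • S := by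
    rw [hSdef, smul_smul]
    norm_num
  -- complex matrices
  set Ac : Matrix (Fin n) (Fin n) ℂ := A.map Complex.ofReal with hAc
  set Uc : Matrix (Fin n) (Fin n) ℂ := U.map Complex.ofReal with hUc
  have hUcH : Ucᴴ = (star U).map Complex.ofReal := by
    rw [hUc, conjTranspose_map_ofReal]
    congr 1
  have hUcUc : Ucᴴ * Uc = 1 := by
    rw [hUcH, hUc, ← map_ofReal_mul, hUU]
    ext i j; by_cases h : i = j <;> simp [h, Matrix.one_apply]
  have hUcUc' : Uc * Ucᴴ = 1 := by
    rw [hUcH, hUc, ← map_ofReal_mul, hUU']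
    ext i j; by_cases h : i = j <;> simp [h, Matrix.one_apply]
  set B : Matrix (Fin n) (Fin n) ℂ := Ucᴴ * Ac * Uc with hB
  -- charpoly of B equals charpoly of Ac
  have hcpB : B.charpoly = Ac.charpoly := charpoly_conj' Ucᴴ Uc Ac hUcUc hUcUc'
  -- Hermitian part of B is diagonal
  have hScmap : S.map Complex.ofReal = Uc * diagonal (fun i => (ν i : ℂ)) * Ucᴴ := by
    rw [hspec, map_ofReal_mul, map_ofReal_mul, hUcH, hUc]
    congr 1
    ext i j
    by_cases h : i = j <;> simp [h, diagonal_apply_ne]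
  have hAcH : Acᴴ = Aᵀ.map Complex.ofReal := conjTranspose_map_ofReal A
  have hAcsum : Ac + Acᴴ = (2 : ℂ) • (Uc * diagonal (fun i => (ν i : ℂ)) * Ucᴴ) := by
    rw [hAcH, ← hScmap, hAc]
    have : A.map Complex.ofReal + Aᵀ.map Complex.ofReal = (A + Aᵀ).map Complex.ofReal := by
      ext i j; simp
    rw [this, h2S]
    ext i j
    simp [Matrix.smul_apply]
  have hBplus : B + Bᴴ = (2 : ℂ) • diagonal (fun i => (ν i : ℂ)) := by
    have hBH : Bᴴ = Ucᴴ * Acᴴ * Uc := by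
      rw [hB, conjTranspose_mul, conjTranspose_mul, conjTranspose_conjTranspose]
      rw [mul_assoc]
    rw [hB, hBH]
    have : Ucᴴ * Ac * Uc + Ucᴴ * Acᴴ * Uc = Ucᴴ * (Ac + Acᴴ) * Uc := by
      rw [mul_add, add_mul]
    rw [this, hAcsum]
    rw [mul_smul_comm, smul_mul_assoc]
    congr 1
    calc Ucᴴ * (Uc * diagonal (fun i => (ν i : ℂ)) * Ucᴴ) * Uc
        = (Ucᴴ * Uc) * diagonal (fun i => (ν i : ℂ)) * (Ucᴴ * Uc) := by
          simp only [mul_assoc]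
      _ = diagonal (fun i => (ν i : ℂ)) := by rw [hUcUc, one_mul, mul_one]
  have hAcnormal : Acᴴ * Ac = Ac * Acᴴ := by
    rw [hAcH, hAc, ← map_ofReal_mul, ← map_ofReal_mul, hNormal]
  have hBnormal : Bᴴ * B = B * Bᴴ := by
    have hBH : Bᴴ = Ucᴴ * Acᴴ * Uc := by
      rw [hB, conjTranspose_mul, conjTranspose_mul, conjTranspose_conjTranspose, mul_assoc]
    rw [hB, hBH]
    calc Ucᴴ * Acᴴ * Uc * (Ucᴴ * Ac * Uc)
        = Ucᴴ * Acᴴ * (Uc * Ucᴴ) * Ac * Uc := by simp only [mul_assoc]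
      _ = Ucᴴ * (Acᴴ * Ac) * Uc := by rw [hUcUc']; simp only [mul_assoc, one_mul]
      _ = Ucᴴ * (Ac * Acᴴ) * Uc := by rw [hAcnormal]
      _ = Ucᴴ * Ac * (Uc * Ucᴴ) * Acᴴ * Uc := by rw [hUcUc']; simp only [mul_assoc, one_mul]
      _ = Ucᴴ * Ac * Uc * (Ucᴴ * Acᴴ * Uc) := by simp only [mul_assoc]
  -- the key multiset identity
  have hroots : Ac.charpoly.roots.map Complex.re = Finset.univ.val.map ν := by
    rw [← hcpB]
    exact roots_re_eq B ν hBplus hBnormal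
  -- eigenvalues are negative
  have hνneg : ∀ i, ν i < 0 := by
    intro i
    have : ν i ∈ Finset.univ.val.map ν :=
      Multiset.mem_map_of_mem ν (Finset.mem_univ_val i)
    rw [← hroots] at this
    obtain ⟨μ, hμ, hμν⟩ := Multiset.mem_map.mp this
    rw [← hμν]
    exact hHurwitz μ hμ
  have hνne : ∀ i, ν i ≠ 0 := fun i => (hνneg i).ne
  -- invertibility of S
  have hdetS : S.det = ∏ i, ν i := by
    have := hS.det_eq_prod_eigenvalues
    simpa [hν] using this
  have hdet0 : IsUnit S.det := by
    rw [hdetS]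
    exact (Finset.prod_ne_zero_iff.mpr (fun i _ => hνne i)).isUnit
  have hSinvS : S⁻¹ * S = 1 := Matrix.nonsing_inv_mul S hdet0
  have hSSinv : S * S⁻¹ = 1 := Matrix.mul_nonsing_inv S hdet0
  -- trace identity : 2 * trace P = -q * trace S⁻¹
  have hPA : P * A + Aᵀ * P = -(q • (1 : Matrix (Fin n) (Fin n) ℝ)) :=
    eq_neg_of_add_eq_zero_left hP
  have hAS : A * S = S * A := by
    rw [hSdef, mul_smul_comm, smul_mul_assoc]
    congr 1
    rw [mul_add, add_mul, hNormal]
  have hASinv : A * S⁻¹ = S⁻¹ * A := by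
    calc A * S⁻¹ = (S⁻¹ * S) * A * S⁻¹ := by rw [hSinvS, one_mul]
      _ = S⁻¹ * (A * S) * S⁻¹ := by rw [hAS]; simp only [mul_assoc]
      _ = S⁻¹ * A * (S * S⁻¹) := by simp only [mul_assoc]
      _ = S⁻¹ * A := by rw [hSSinv, mul_one]
  have hKey : A * S⁻¹ + S⁻¹ * Aᵀ = (2 : ℝ) • (1 : Matrix (Fin n) (Fin n) ℝ) := by
    rw [hASinv, ← mul_add, h2S, mul_smul_comm, hSinvS]
  have htrace2 : 2 * P.trace = -q * S⁻¹.trace := by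
    have e1 : ((P * A + Aᵀ * P) * S⁻¹).trace = (-(q • (1 : Matrix (Fin n) (Fin n) ℝ)) * S⁻¹).trace := by
      rw [hPA]
    have e2 : (-(q • (1 : Matrix (Fin n) (Fin n) ℝ)) * S⁻¹).trace = -q * S⁻¹.trace := by
      rw [neg_mul, smul_mul_assoc, one_mul, trace_neg, trace_smul]
      simp [neg_mul]
    have e3 : ((P * A + Aᵀ * P) * S⁻¹).trace = 2 * P.trace := by
      rw [add_mul, trace_add]
      have e4 : (Aᵀ * P * S⁻¹).trace = (P * (S⁻¹ * Aᵀ)).trace := by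
        rw [mul_assoc, trace_mul_comm, mul_assoc]
      rw [e4, mul_assoc, ← trace_add, ← mul_add, hKey]
      rw [mul_smul_comm, mul_one, trace_smul]
      simp [mul_comm]
    rw [← e3, e1, e2]
  -- trace of S⁻¹
  have hSinv_eq : S⁻¹ = U * diagonal (fun i => (ν i)⁻¹) * star U := by
    apply Matrix.inv_eq_right_inv
    rw [hspec]
    calc U * diagonal ν * star U * (U * diagonal (fun i => (ν i)⁻¹) * star U)
        = U * diagonal ν * (star U * U) * diagonal (fun i => (ν i)⁻¹) * star U := by
          simp only [mul_assoc]
      _ = U * (diagonal ν * diagonal (fun i => (ν i)⁻¹)) * star U := by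
          rw [hUU]; simp only [mul_assoc, one_mul]
      _ = 1 := by
          rw [diagonal_mul_diagonal]
          have : (fun i => ν i * (ν i)⁻¹) = fun _ => (1 : ℝ) := by
            funext i; exact mul_inv_cancel₀ (hνne i)
          rw [this, diagonal_one]
          rw [mul_one, hUU']
  have htrSinv : S⁻¹.trace = ∑ i, (ν i)⁻¹ := by
    rw [hSinv_eq, trace_mul_cycle, hUU, one_mul, trace_diagonal]
  -- sum computations
  have hsum1 : ((Ac.charpoly.roots).map (fun μ => q / (2 * μ.re))).sum = ∑ i, q / (2 * ν i) := by
    have he : (fun μ : ℂ => q / (2 * μ.re)) = (fun r : ℝ => q / (2 * r)) ∘ Complex.re := rfl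
    rw [he, ← Multiset.map_map, hroots, Multiset.map_map]
    rfl
  have hcpS : S.charpoly.roots = Finset.univ.val.map ν := by
    have hconj : S.charpoly = (diagonal ν).charpoly := by
      rw [hspec]
      exact charpoly_conj' U (star U) (diagonal ν) hUU' hUU
    rw [hconj, charpoly_of_upperTriangular _ (blockTriangular_diagonal _)]
    have h1 : (∏ i, (X - C ((diagonal ν) i i))) = ∏ i, (X - C (ν i)) := by
      apply Finset.prod_congr rfl
      intro i _
      rw [diagonal_apply_eq]
    rw [h1]
    have h2 : (∏ i, (X - C (ν i))) = ((Finset.univ.val.map ν).map (fun a => X - C a)).prod := by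
      rw [Multiset.map_map]
      rfl
    rw [h2, roots_multiset_prod_X_sub_C]
  have hsum2 : ((S.charpoly.roots).map (fun v => q / (2 * v))).sum = ∑ i, q / (2 * ν i) := by
    rw [hcpS, Multiset.map_map]
    rfl
  have htrP : P.trace = -∑ i, q / (2 * ν i) := by
    have h1 : ∑ i, q / (2 * ν i) = q * (∑ i, (ν i)⁻¹) / 2 := by
      have : ∀ i : Fin n, q / (2 * ν i) = q * (ν i)⁻¹ / 2 := by
        intro i
        rw [div_eq_mul_inv, mul_inv]
        ring
      rw [Finset.sum_congr rfl (fun i _ => this i), ← Finset.sum_div, ← Finset.mul_sum]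
    have h2 := htrace2
    rw [htrSinv] at h2
    rw [h1]
    linarith
  exact ⟨by rw [htrP, hsum1], by rw [htrP, hsum2]⟩
end

section
/- Let Γ be an n×n complex diagonal matrix and N strictly upper triangular. Then for every t ≥ 0, trace(exp((Γ+N)t)ᴴ · exp((Γ+N)t)) ≥ trace(exp((Γᴴ+Γ)t)) = ∑_{i=1}^n e^{2 Re(Γ_{ii}) t}. -/
open Matrix NormedSpace Real Nat

attribute [local instance] Matrix.linftyOpNormedRing Matrix.linftyOpNormedAlgebra

private lemma pow_tri_entry {n : ℕ} (A : Matrix (Fin n) (Fin n) ℂ)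
    (hA : ∀ i j : Fin n, j < i → A i j = 0) (k : ℕ) :
    (∀ i j : Fin n, j < i → (A ^ k) i j = 0) ∧ (∀ i, (A ^ k) i i = (A i i) ^ k) := by
  induction k with
  | zero =>
    refine ⟨fun i j h => ?_, fun i => by simp⟩
    simp [Matrix.one_apply, h.ne']
  | succ k ih =>
    constructor
    · intro i j hij
      rw [pow_succ, Matrix.mul_apply]
      apply Finset.sum_eq_zero; intro m _
      rcases lt_or_ge m i with h | h
      · rw [ih.1 i m h, zero_mul]
      · rw [hA m j (lt_of_lt_of_le hij h), mul_zero]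
    · intro i
      rw [pow_succ, Matrix.mul_apply, Finset.sum_eq_single i]
      · rw [ih.2, pow_succ]
      · intro m _ hm
        rcases lt_or_gt_of_ne hm with h | h
        · rw [ih.1 i m h, zero_mul]
        · rw [hA m i h, mul_zero]
      · simp

private lemma exp_tri_diag {n : ℕ} (A : Matrix (Fin n) (Fin n) ℂ)
    (hA : ∀ i j : Fin n, j < i → A i j = 0) (i : Fin n) :
    exp A i i = Complex.exp (A i i) := by
  have hs : HasSum (fun k : ℕ => ((k.factorial : ℂ))⁻¹ • A ^ k) (exp A) := by
    rw [exp_eq_tsum ℂ]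
    exact (expSeries_summable' A).hasSum
  let e : Matrix (Fin n) (Fin n) ℂ →ₗ[ℂ] ℂ :=
    { toFun := fun M => M i i
      map_add' := fun _ _ => rfl
      map_smul' := fun _ _ => rfl }
  have he : Continuous e := LinearMap.continuous_of_finiteDimensional e
  have h2 : HasSum (fun k : ℕ => ((k.factorial : ℂ))⁻¹ • (A i i) ^ k) (exp A i i) := by
    have hp : ∀ k, (A ^ k) i i = (A i i) ^ k := fun k => (pow_tri_entry A hA k).2 i
    have := hs.map e.toAddMonoidHom he
    have h' : HasSum (fun k : ℕ => ((k.factorial : ℂ))⁻¹ • (A ^ k) i i) (exp A i i) := this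
    simpa [hp] using h'
  have h3 : HasSum (fun k : ℕ => ((k.factorial : ℂ))⁻¹ • (A i i) ^ k) (exp (A i i)) := by
    rw [exp_eq_tsum ℂ]
    exact (expSeries_summable' (A i i)).hasSum
  rw [h2.unique h3, Complex.exp_eq_exp_ℂ]

/-- For `Γ` diagonal and `N` strictly upper triangular and `t ≥ 0`,
`trace(exp((Γ+N)t)ᴴ exp((Γ+N)t)) ≥ trace(exp((Γᴴ+Γ)t)) = ∑ᵢ e^{2 Re(Γᵢᵢ) t}`. -/
theorem trace_exp_triangular_lower_bound {n : ℕ} (Γ N : Matrix (Fin n) (Fin n) ℂ)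
    (hΓ : Γ.IsDiag) (hN : ∀ i j : Fin n, j ≤ i → N i j = 0) (t : ℝ) (ht : 0 ≤ t) :
    (((exp (t • (Γ + N)))ᴴ * exp (t • (Γ + N))).trace).re ≥
      ∑ i : Fin n, Real.exp (2 * (Γ i i).re * t) ∧
    (exp (t • (Γᴴ + Γ))).trace = ∑ i : Fin n, (Real.exp (2 * (Γ i i).re * t) : ℂ) := by
  constructor
  · set A := t • (Γ + N) with hAdef
    have hA : ∀ i j : Fin n, j < i → A i j = 0 := by
      intro i j h
      simp [hAdef, Matrix.smul_apply, hN i j h.le, hΓ h.ne']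
    have hAii : ∀ i : Fin n, A i i = (t : ℂ) * Γ i i := by
      intro i
      simp [hAdef, Matrix.smul_apply, hN i i le_rfl, Complex.real_smul]
    set E := exp A with hE
    have hdiag : ∀ i, E i i = Complex.exp ((t : ℂ) * Γ i i) := fun i => by
      rw [hE, exp_tri_diag A hA i, hAii i]
    have hre : ((Eᴴ * E).trace).re = ∑ i : Fin n, ∑ j : Fin n, Complex.normSq (E j i) := by
      simp only [Matrix.trace, Matrix.diag, Matrix.mul_apply, Matrix.conjTranspose_apply]
      rw [Complex.re_sum]
      refine Finset.sum_congr rfl fun i _ => ?_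
      rw [Complex.re_sum]
      refine Finset.sum_congr rfl fun j _ => ?_
      rw [Complex.star_def, ← Complex.normSq_eq_conj_mul_self, Complex.ofReal_re]
    rw [ge_iff_le, hre]
    refine Finset.sum_le_sum fun i _ => ?_
    have hterm : Complex.normSq (E i i) = Real.exp (2 * (Γ i i).re * t) := by
      rw [hdiag i, Complex.normSq_eq_norm_sq, Complex.norm_exp, sq, ← Real.exp_add]
      congr 1
      simp [Complex.mul_re]
      ring
    calc Real.exp (2 * (Γ i i).re * t) = Complex.normSq (E i i) := hterm.symm
      _ ≤ ∑ j : Fin n, Complex.normSq (E j i) :=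
        Finset.single_le_sum (f := fun j => Complex.normSq (E j i)) (fun j _ => Complex.normSq_nonneg _) (Finset.mem_univ i)
  · have hΓd : Γ = Matrix.diagonal Γ.diag := hΓ.diagonal_diag.symm
    rw [hΓd]
    rw [Matrix.diagonal_conjTranspose, Matrix.diagonal_add, ← Matrix.diagonal_smul,
      Matrix.exp_diagonal, Matrix.trace_diagonal]
    refine Finset.sum_congr rfl fun i _ => ?_
    rw [Pi.exp_def]
    simp only [Pi.smul_apply, Pi.add_apply, Pi.star_apply, Matrix.diag_apply,
      Matrix.diagonal_apply_eq]
    rw [← Complex.exp_eq_exp_ℂ]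
    have h2 : t • (star (Γ i i) + Γ i i) = ((2 * (Γ i i).re * t : ℝ) : ℂ) := by
      rw [Complex.star_def, add_comm, Complex.add_conj, Complex.real_smul]
      push_cast
      ring
    rw [h2, Complex.ofReal_exp]
end

section
/- Let n ≥ 1, a, c > 0, and let A be the n×n cyclic matrix with -a on the diagonal, c on the subdiagonal, and -c in the upper-right corner. Then A is Hurwitz (all eigenvalues have negative real part) if and only if a/c > cos(π/n). -/
open Matrix Real

open Polynomial in
lemma det_cyclic' {R : Type*} [CommRing R] (m : ℕ) (d s t : R) :
    (Matrix.of fun i j : Fin (m+2) =>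
      if i = j then d else if (i:ℕ) = (j:ℕ)+1 then s
      else if (i:ℕ) = 0 ∧ (j:ℕ) = m+1 then t else 0).det
      = d^(m+2) + (-1)^(m+1) * t * s^(m+1) := by
  set M : Matrix (Fin (m+2)) (Fin (m+2)) R := Matrix.of fun i j : Fin (m+2) =>
      if i = j then d else if (i:ℕ) = (j:ℕ)+1 then s
      else if (i:ℕ) = 0 ∧ (j:ℕ) = m+1 then t else 0 with hM
  have entry : ∀ i j : Fin (m+2), M i j =
      if (i:ℕ) = (j:ℕ) then d else if (i:ℕ) = (j:ℕ)+1 then s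
      else if (i:ℕ) = 0 ∧ (j:ℕ) = m+1 then t else 0 := by
    intro i j
    rw [hM, Matrix.of_apply]
    exact if_congr Fin.ext_iff rfl rfl
  clear hM
  rw [Matrix.det_succ_row_zero]
  have hzero : ∀ j : Fin (m+2), j ∉ ({0, Fin.last (m+1)} : Finset (Fin (m+2))) →
      (-1 : R)^(j:ℕ) * M 0 j * (M.submatrix Fin.succ j.succAbove).det = 0 := by
    intro j hj
    simp only [Finset.mem_insert, Finset.mem_singleton, Fin.ext_iff, Fin.val_zero,
      Fin.val_last] at hj
    push_neg at hj
    have h1 : M 0 j = 0 := by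
      rw [entry]
      have hj1 : (j : ℕ) ≠ 0 := hj.1
      have hj2 : (j : ℕ) ≠ m + 1 := hj.2
      simp only [Fin.val_zero]
      rw [if_neg (by omega), if_neg (by omega), if_neg (by omega)]
    rw [h1, mul_zero, zero_mul]
  rw [← Finset.sum_subset (Finset.subset_univ ({0, Fin.last (m+1)} : Finset (Fin (m+2))))
    (fun j _ hj => hzero j hj)]
  rw [Finset.sum_pair (by simp [Fin.ext_iff])]
  have hM00 : M 0 0 = d := by rw [entry]; simp
  have hM0l : M 0 (Fin.last (m+1)) = t := by
    rw [entry]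
    simp only [Fin.val_zero, Fin.val_last]
    rw [if_neg (by omega), if_neg (by omega)]
    simp
  have hminor1 : (M.submatrix Fin.succ (Fin.succAbove 0)).det = d^(m+1) := by
    rw [Matrix.det_of_lowerTriangular]
    · have h : ∀ i ∈ Finset.univ, M.submatrix Fin.succ (Fin.succAbove 0) i i = d := by
        intro i _
        have : (((0:Fin (m+2)).succAbove i : Fin (m+2)) : ℕ) = (i:ℕ) + 1 := by
          simp [Fin.succAbove, Fin.lt_iff_val_lt_val]
        rw [Matrix.submatrix_apply, entry, this, Fin.val_succ, if_pos rfl]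
      rw [Finset.prod_congr rfl h, Finset.prod_const, Finset.card_univ, Fintype.card_fin]
    · intro i j hij
      replace hij : (i:ℕ) < (j:ℕ) := hij
      have hs : (((0:Fin (m+2)).succAbove j : Fin (m+2)) : ℕ) = (j:ℕ) + 1 := by
        simp [Fin.succAbove, Fin.lt_iff_val_lt_val]
      rw [Matrix.submatrix_apply, entry, hs, Fin.val_succ]
      rw [if_neg (by omega), if_neg (by omega), if_neg (by omega)]
  have hminor2 : (M.submatrix Fin.succ (Fin.succAbove (Fin.last (m+1)))).det = s^(m+1) := by
    rw [Matrix.det_of_upperTriangular]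
    · have h : ∀ i ∈ Finset.univ,
          M.submatrix Fin.succ (Fin.succAbove (Fin.last (m+1))) i i = s := by
        intro i _
        rw [Matrix.submatrix_apply, Fin.succAbove_last, entry, Fin.val_succ, Fin.coe_castSucc]
        rw [if_neg (by omega), if_pos rfl]
      rw [Finset.prod_congr rfl h, Finset.prod_const, Finset.card_univ, Fintype.card_fin]
    · intro i j hij
      replace hij : (j:ℕ) < (i:ℕ) := hij
      rw [Matrix.submatrix_apply, Fin.succAbove_last, entry, Fin.val_succ, Fin.coe_castSucc]
      rw [if_neg (by omega), if_neg (by omega), if_neg (by omega)]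
  rw [hM00, hM0l, hminor1, hminor2]
  simp only [Fin.val_zero, Fin.val_last, pow_zero, one_mul]
  ring

lemma charpoly_cyclic (m : ℕ) (a c : ℝ) :
    (((Matrix.of fun i j : Fin (m+2) =>
      if i = j then -a
      else if (i : ℕ) = (j : ℕ) + 1 then c
      else if (i : ℕ) = 0 ∧ (j : ℕ) = (m+2) - 1 then -c
      else 0)).map (Complex.ofReal)).charpoly
      = (Polynomial.X + Polynomial.C (a:ℂ))^(m+2) + Polynomial.C ((c:ℂ)^(m+2)) := by
  rw [Matrix.charpoly]
  have hch : charmatrix ((Matrix.of fun i j : Fin (m+2) =>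
      if i = j then -a
      else if (i : ℕ) = (j : ℕ) + 1 then c
      else if (i : ℕ) = 0 ∧ (j : ℕ) = (m+2) - 1 then -c
      else 0).map (Complex.ofReal)) =
      Matrix.of fun i j : Fin (m+2) =>
        if i = j then Polynomial.X + Polynomial.C (a:ℂ)
        else if (i:ℕ) = (j:ℕ)+1 then -Polynomial.C (c:ℂ)
        else if (i:ℕ) = 0 ∧ (j:ℕ) = m+1 then Polynomial.C (c:ℂ) else 0 := by
    ext i j
    by_cases hij : i = j
    · subst hij
      rw [Matrix.charmatrix_apply_eq, Matrix.map_apply, Matrix.of_apply, Matrix.of_apply,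
        if_pos rfl, if_pos rfl, Complex.ofReal_neg, map_neg, sub_neg_eq_add]
    · rw [Matrix.charmatrix_apply_ne _ _ _ hij, Matrix.map_apply, Matrix.of_apply,
        Matrix.of_apply, if_neg hij, if_neg hij]
      by_cases h2 : (i:ℕ) = (j:ℕ)+1
      · rw [if_pos h2, if_pos h2]
      · rw [if_neg h2, if_neg h2]
        by_cases h3 : (i:ℕ) = 0 ∧ (j:ℕ) = (m+2)-1
        · rw [if_pos h3, if_pos (by omega : (i:ℕ) = 0 ∧ (j:ℕ) = m+1), Complex.ofReal_neg, map_neg, neg_neg]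
        · rw [if_neg h3, if_neg (by omega : ¬((i:ℕ) = 0 ∧ (j:ℕ) = m+1))]
          simp
  rw [hch, det_cyclic', map_pow]
  rw [add_right_inj]
  calc (-1)^(m+1) * Polynomial.C (c:ℂ) * (-Polynomial.C (c:ℂ))^(m+1)
      = ((-1)^(m+1) * (-1)^(m+1)) * (Polynomial.C (c:ℂ) * Polynomial.C (c:ℂ)^(m+1)) := by
        rw [neg_pow]; ring
    _ = Polynomial.C (c:ℂ)^(m+2) := by
        rw [← pow_add, Even.neg_one_pow ⟨m+1, by ring⟩, one_mul, ← pow_succ']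

open Polynomial in
lemma roots_char (n : ℕ) (hn : 0 < n) (a c : ℝ) (μ : ℂ) :
    μ ∈ ((X + C (a:ℂ))^n + C ((c:ℂ)^n)).roots ↔ (μ + a)^n + c^n = 0 := by
  have hmon : ((X + C (a:ℂ))^n + C ((c:ℂ)^n)).Monic := by
    apply Polynomial.Monic.add_of_left ((monic_X_add_C _).pow n)
    apply lt_of_le_of_lt (degree_C_le)
    rw [degree_pow, degree_X_add_C]
    simpa using hn
  rw [Polynomial.mem_roots hmon.ne_zero, Polynomial.IsRoot.def]
  simp

open Complex in
lemma key_iff (n : ℕ) (hn : 0 < n) (a c : ℝ) (ha : 0 < a) (hc : 0 < c) :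
    (∀ μ : ℂ, (μ + a)^n + c^n = 0 → μ.re < 0) ↔ a / c > Real.cos (π / n) := by
  constructor
  · intro h
    by_contra hle
    push_neg at hle
    have hle' : a ≤ c * Real.cos (π / n) := by
      rw [div_le_iff₀ hc] at hle; linarith
    set μ : ℂ := (c:ℂ) * Complex.exp ((π/n : ℝ) * I) - a with hμ
    have hroot : (μ + a)^n + c^n = 0 := by
      have h1 : μ + a = (c:ℂ) * Complex.exp ((π/n : ℝ) * I) := by rw [hμ]; ring
      have h2 : (Complex.exp ((π/n : ℝ) * I))^n = -1 := by
        rw [← Complex.exp_nat_mul]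
        have hn' : (n:ℂ) ≠ 0 := Nat.cast_ne_zero.mpr hn.ne'
        have : (n:ℂ) * ((π/n : ℝ) * I) = (π:ℝ) * I := by
          push_cast
          field_simp
        rw [this, Complex.exp_pi_mul_I]
      rw [h1, mul_pow, h2]
      ring
    have hre : μ.re = c * Real.cos (π/n) - a := by
      rw [hμ, Complex.sub_re, Complex.ofReal_re, Complex.re_ofReal_mul,
        Complex.exp_ofReal_mul_I_re]
    have := h μ hroot
    rw [hre] at this
    linarith
  · intro hgt μ hroot
    set z : ℂ := μ + a with hz
    have hzn : z^n = -((c:ℂ)^n) := by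
      rw [hz]; linear_combination hroot
    have habs : ‖z‖ = c := by
      have h1 : ‖z‖^n = c^n := by
        rw [← norm_pow, hzn, norm_neg, ← Complex.ofReal_pow, Complex.norm_real, Real.norm_eq_abs]
        exact abs_of_nonneg (by positivity)
      exact (pow_left_inj₀ (norm_nonneg z) hc.le hn.ne').mp h1
    have hz0 : z ≠ 0 := by
      intro h0
      rw [h0, norm_zero] at habs
      exact hc.ne habs
    set θ : ℝ := Complex.arg z with hθ
    have hzdef : z = (c:ℂ) * Complex.exp ((θ:ℂ) * Complex.I) := by
      rw [← habs]
      exact (Complex.norm_mul_exp_arg_mul_I z).symm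
    -- exp(nθ I) = -1
    have hexp : Complex.exp ((n:ℂ) * ((θ:ℂ) * Complex.I)) = -1 := by
      rw [Complex.exp_nat_mul]
      have hcn : ((c:ℂ))^n ≠ 0 := pow_ne_zero n (Complex.ofReal_ne_zero.mpr hc.ne')
      have := hzn
      rw [hzdef, mul_pow] at this
      calc Complex.exp (↑θ * Complex.I)^n
          = ((c:ℂ)^n * Complex.exp (↑θ * Complex.I)^n) / (c:ℂ)^n := by field_simp
        _ = -1 := by rw [this, neg_div, div_self hcn]
    have hpi : Complex.exp ((π:ℂ) * Complex.I) = -1 := Complex.exp_pi_mul_I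
    rw [← hpi, Complex.exp_eq_exp_iff_exists_int] at hexp
    obtain ⟨k, hk⟩ := hexp
    have hkre : (n:ℝ) * θ = π + k * (2 * π) := by
      have := congrArg Complex.im hk
      simpa [Complex.mul_im, Complex.add_im] using this
    have hnpos : (0:ℝ) < n := Nat.cast_pos.mpr hn
    have hθabs : π / n ≤ |θ| := by
      have h1 : (n:ℝ) * |θ| = |π + k * (2*π)| := by
        rw [← hkre, abs_mul, abs_of_pos hnpos]
      have h2 : π ≤ |π + k * (2*π)| := by
        have : π + k * (2*π) = π * (2*k + 1) := by push_cast; ring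
        rw [this, abs_mul, abs_of_pos Real.pi_pos]
        have : (1:ℝ) ≤ |2*(k:ℝ) + 1| := by
          have : (2*k + 1 : ℤ) ≠ 0 := by omega
          calc (1:ℝ) = ((1:ℤ):ℝ) := by norm_num
            _ ≤ |((2*k+1 : ℤ) : ℝ)| := by
                rw [← Int.cast_abs]
                exact_mod_cast Int.one_le_abs this
            _ = |2*(k:ℝ) + 1| := by push_cast; ring_nf
        nlinarith [Real.pi_pos]
      rw [div_le_iff₀ hnpos]
      nlinarith
    have hcos : Real.cos θ ≤ Real.cos (π / n) := by
      rw [← Real.cos_abs θ]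
      exact Real.cos_le_cos_of_nonneg_of_le_pi (by positivity) (Complex.abs_arg_le_pi z) hθabs
    have hzre : z.re = c * Real.cos θ := by
      rw [hzdef, Complex.re_ofReal_mul, Complex.exp_ofReal_mul_I_re]
    have hμre : μ.re = c * Real.cos θ - a := by
      have : μ = z - a := by rw [hz]; ring
      rw [this, Complex.sub_re, Complex.ofReal_re, hzre]
    rw [hμre]
    have hca : c * Real.cos (π/n) < a := by
      have h := mul_lt_mul_of_pos_left hgt hc
      rwa [mul_comm c (a/c), div_mul_cancel₀ a hc.ne'] at h
    linarith [mul_le_mul_of_nonneg_left hcos hc.le]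

/-- The `n×n` cyclic matrix (`-a` diagonal, `c` subdiagonal, `-c` corner,
`a, c > 0`) is Hurwitz if and only if `a/c > cos(π/n)`. -/
theorem cyclic_matrix_hurwitz_iff {n : ℕ} (hn : 1 ≤ n) (a c : ℝ) (ha : 0 < a) (hc : 0 < c)
    (A : Matrix (Fin n) (Fin n) ℝ)
    (hA : A = Matrix.of fun i j : Fin n =>
      if i = j then -a
      else if (i : ℕ) = (j : ℕ) + 1 then c
      else if (i : ℕ) = 0 ∧ (j : ℕ) = n - 1 then -c
      else 0) :
    (∀ μ ∈ (A.map (Complex.ofReal)).charpoly.roots, μ.re < 0) ↔ a / c > Real.cos (π / n) := by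
  subst hA
  rcases Nat.lt_or_ge n 2 with h2 | h2
  · -- n = 1
    have hn1 : n = 1 := by omega
    subst hn1
    have hrhs : Real.cos (π / (1:ℕ)) < a / c := by
      rw [Nat.cast_one, div_one, Real.cos_pi]
      have : 0 < a / c := by positivity
      linarith
    constructor
    · intro _; exact hrhs
    · intro _ μ hμ
      have hcp : ((Matrix.of fun i j : Fin 1 =>
          if i = j then -a
          else if (i : ℕ) = (j : ℕ) + 1 then c
          else if (i : ℕ) = 0 ∧ (j : ℕ) = 1 - 1 then -c
          else 0).map (Complex.ofReal)).charpoly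
          = Polynomial.X - Polynomial.C (-(a:ℂ)) := by
        rw [Matrix.charpoly, Matrix.det_fin_one, Matrix.charmatrix_apply_eq]
        simp
      rw [hcp, Polynomial.roots_X_sub_C, Multiset.mem_singleton] at hμ
      subst hμ
      simp [ha]
  · obtain ⟨m, rfl⟩ : ∃ m, n = m + 2 := ⟨n - 2, by omega⟩
    rw [charpoly_cyclic]
    have hn0 : 0 < m + 2 := by omega
    constructor
    · intro h
      rw [← key_iff (m+2) hn0 a c ha hc]
      intro μ hμ
      exact h μ ((roots_char (m+2) hn0 a c μ).mpr hμ)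
    · intro h μ hμ
      exact (key_iff (m+2) hn0 a c ha hc).mpr h μ ((roots_char (m+2) hn0 a c μ).mp hμ)
end

section
/- Let n ≥ 1 and β > 0. Then ∑_{k=0}^{n-1} 1 / (cosh(β/n) - cos((2k+1)π/n)) = n·tanh(β/2) / sinh(β/n). -/
open Real

/-- For `n ≥ 1` and `β > 0`,
`∑_{k=0}^{n-1} 1/(cosh(β/n) - cos((2k+1)π/n)) = n·tanh(β/2)/sinh(β/n)`. -/
theorem sum_inv_cosh_sub_cos {n : ℕ} (hn : 1 ≤ n) (β : ℝ) (hβ : 0 < β) :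
    ∑ k ∈ Finset.range n, 1 / (Real.cosh (β / n) - Real.cos ((2 * k + 1) * π / n)) =
      n * Real.tanh (β / 2) / Real.sinh (β / n) := by
  have hnpos : 0 < (n : ℝ) := by exact_mod_cast hn
  have hn0 : (n : ℝ) ≠ 0 := ne_of_gt hnpos
  set t : ℝ := β / n with ht_def
  have ht : 0 < t := div_pos hβ hnpos
  set θ : ℕ → ℝ := fun k => (2 * k + 1) * π / n with hθ_def
  set z : ℂ := (Real.exp t : ℂ) with hz_def
  have hz0 : z ≠ 0 := by
    simp [hz_def, Complex.ofReal_ne_zero, Real.exp_ne_zero]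
  set w : ℕ → ℂ := fun k => Complex.exp ((θ k : ℂ) * Complex.I) with hw_def
  have hw0 : ∀ k, w k ≠ 0 := fun k => Complex.exp_ne_zero _
  -- z^n = exp β
  have hzn : z ^ n = (Real.exp β : ℂ) := by
    rw [hz_def, ← Complex.ofReal_pow, ← Real.exp_nat_mul]
    congr 2
    rw [ht_def]; field_simp
  have hnC : (n : ℂ) ≠ 0 := Nat.cast_ne_zero.mpr (by omega)
  have hzn1 : z ^ n + 1 ≠ 0 := by
    rw [hzn]
    intro h
    have h' : Real.exp β + 1 = (0 : ℝ) := by exact_mod_cast h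
    linarith [Real.exp_pos β]
  -- w k ^ n = -1
  have hwn : ∀ k, w k ^ n = -1 := by
    intro k
    rw [hw_def]
    simp only
    rw [← Complex.exp_nat_mul]
    have h1 : (n : ℂ) * ((θ k : ℂ) * Complex.I) = ((2 * k + 1 : ℕ) : ℂ) * (↑π * Complex.I) := by
      simp only [hθ_def]
      push_cast
      field_simp [hnC]
    rw [h1, Complex.exp_nat_mul, Complex.exp_pi_mul_I]
    have hodd : Odd (2 * k + 1) := ⟨k, rfl⟩
    exact hodd.neg_one_pow
  -- z ≠ w k
  have hzw : ∀ k, z - w k ≠ 0 := by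
    intro k h
    have hzeq : z = w k := by linear_combination h
    have : z ^ n = -1 := by rw [hzeq, hwn k]
    rw [hzn] at this
    have h' : Real.exp β = (-1 : ℝ) := by exact_mod_cast this
    linarith [Real.exp_pos β]
  -- geometric sum of roots
  set ζ : ℂ := Complex.exp (2 * ↑π * Complex.I / n) with hζ_def
  have hζprim : IsPrimitiveRoot ζ n := Complex.isPrimitiveRoot_exp n (by omega)
  have hW : ∀ j, j < n → ∑ k ∈ Finset.range n, (w k) ^ j
      = if j = 0 then (n : ℂ) else 0 := by
    intro j hj
    have hwkj : ∀ k, (w k) ^ j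
        = Complex.exp ((j : ℂ) * π / n * Complex.I) * (ζ ^ j) ^ k := by
      intro k
      rw [hw_def, hζ_def]
      simp only
      rw [← Complex.exp_nat_mul, ← Complex.exp_nat_mul, ← Complex.exp_nat_mul,
        ← Complex.exp_add]
      congr 1
      simp only [hθ_def]
      push_cast
      field_simp
      ring
    rcases eq_or_ne j 0 with hj0 | hj0
    · simp [hj0]
    · simp only [hj0, if_false]
      have hζj1 : ζ ^ j ≠ 1 := by
        intro h
        have hd := (hζprim.pow_eq_one_iff_dvd j).mp h
        exact absurd (Nat.le_of_dvd (Nat.pos_of_ne_zero hj0) hd) (by omega)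
      have hζjn : (ζ ^ j) ^ n = 1 := by
        rw [← pow_mul, mul_comm, pow_mul, hζprim.pow_eq_one, one_pow]
      calc ∑ k ∈ Finset.range n, (w k) ^ j
          = Complex.exp ((j : ℂ) * π / n * Complex.I)
            * ∑ k ∈ Finset.range n, (ζ ^ j) ^ k := by
            rw [Finset.mul_sum]; exact Finset.sum_congr rfl fun k _ => hwkj k
        _ = 0 := by rw [geom_sum_eq hζj1, hζjn]; simp
  -- the key sum
  have hS : ∑ k ∈ Finset.range n, (z - w k)⁻¹ = n * z ^ (n - 1) / (z ^ n + 1) := by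
    have key : ∀ k ∈ Finset.range n, (z - w k)⁻¹
        = (∑ i ∈ Finset.range n, z ^ i * (w k) ^ (n - 1 - i)) / (z ^ n + 1) := by
      intro k _
      have hg : (∑ i ∈ Finset.range n, z ^ i * (w k) ^ (n - 1 - i)) * (z - w k)
          = z ^ n + 1 := by rw [geom_sum₂_mul, hwn k]; ring
      rw [eq_div_iff hzn1, ← hg, mul_comm, mul_assoc, mul_inv_cancel₀ (hzw k), mul_one]
    rw [Finset.sum_congr rfl key, ← Finset.sum_div]
    congr 1
    rw [Finset.sum_comm]
    have : ∀ i ∈ Finset.range n,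
        ∑ k ∈ Finset.range n, z ^ i * (w k) ^ (n - 1 - i)
        = z ^ i * (if n - 1 - i = 0 then (n : ℂ) else 0) := by
      intro i hi
      rw [← Finset.mul_sum, hW _ (by simp at hi; omega)]
    rw [Finset.sum_congr rfl this, Finset.sum_eq_single_of_mem (n - 1)
      (Finset.mem_range.mpr (by omega))]
    · simp [mul_comm]
    · intro i hi hne
      have : n - 1 - i ≠ 0 := by simp at hi; omega
      simp [this]
  -- sum of (z+w)/(z-w)
  have hF : ∑ k ∈ Finset.range n, (z + w k) / (z - w k)
      = n * (z ^ n - 1) / (z ^ n + 1) := by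
    have key : ∀ k ∈ Finset.range n, (z + w k) / (z - w k)
        = -1 + 2 * z * (z - w k)⁻¹ := by
      intro k _
      field_simp [hzw k]
      ring
    rw [Finset.sum_congr rfl key, Finset.sum_add_distrib]
    simp only [Finset.sum_const, Finset.card_range, ← Finset.mul_sum, hS]
    have hzz : z * z ^ (n - 1) = z ^ n := by
      rw [← pow_succ']
      congr 1
      omega
    field_simp [hzn1]
    ring_nf
    rw [show (n:ℂ) * z * z ^ (n-1) * 2 = 2 * n * (z * z ^ (n-1)) by ring, hzz]
    ring
  -- inverse symmetry
  have hinv : ∀ k, k < n → (w k)⁻¹ = w (n - 1 - k) := by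
    intro k hk
    rw [hw_def]
    simp only
    rw [← Complex.exp_neg]
    have harg : (θ (n - 1 - k) : ℂ) * Complex.I
        = -((θ k : ℂ) * Complex.I) + 2 * π * Complex.I := by
      simp only [hθ_def]
      have : ((n - 1 - k : ℕ) : ℂ) = (n : ℂ) - 1 - k := by
        push_cast [Nat.cast_sub (by omega : k ≤ n - 1), Nat.cast_sub (by omega : 1 ≤ n)]
        ring
      push_cast
      rw [this]
      field_simp
      ring
    rw [harg, Complex.exp_add, Complex.exp_two_pi_mul_I, mul_one]
  -- reflected sum
  have hF' : ∑ k ∈ Finset.range n, (z + (w k)⁻¹) / (z - (w k)⁻¹)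
      = ∑ k ∈ Finset.range n, (z + w k) / (z - w k) := by
    have : ∀ k ∈ Finset.range n, (z + (w k)⁻¹) / (z - (w k)⁻¹)
        = (z + w (n - 1 - k)) / (z - w (n - 1 - k)) := by
      intro k hk
      rw [hinv k (Finset.mem_range.mp hk)]
    rw [Finset.sum_congr rfl this,
      Finset.sum_range_reflect (fun j => (z + w j) / (z - w j)) n]
  -- per-term identity
  have hcpos : ∀ k, 0 < Real.cosh t - Real.cos (θ k) := by
    intro k
    have h1 : 1 < Real.cosh t := Real.one_lt_cosh.mpr (ne_of_gt ht)
    have h2 : Real.cos (θ k) ≤ 1 := Real.cos_le_one _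
    linarith
  have hzwinv : ∀ k, k < n → z - (w k)⁻¹ ≠ 0 := by
    intro k hk
    rw [hinv k hk]
    exact hzw _
  have hterm : ∀ k ∈ Finset.range n,
      ((Real.sinh t / (Real.cosh t - Real.cos (θ k)) : ℝ) : ℂ)
      = ((z + w k) / (z - w k) + (z + (w k)⁻¹) / (z - (w k)⁻¹)) / 2 := by
    intro k hk
    have hk' := Finset.mem_range.mp hk
    have hc := hcpos k
    have hsinh : ((Real.sinh t : ℝ) : ℂ) = (z - z⁻¹) / 2 := by
      rw [Real.sinh_eq, Real.exp_neg]
      push_cast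
      rw [hz_def, Complex.ofReal_exp]
    have hcosh : ((Real.cosh t : ℝ) : ℂ) = (z + z⁻¹) / 2 := by
      rw [Real.cosh_eq, Real.exp_neg]
      push_cast
      rw [hz_def, Complex.ofReal_exp]
    have hcos : ((Real.cos (θ k) : ℝ) : ℂ) = (w k + (w k)⁻¹) / 2 := by
      rw [Complex.ofReal_cos, Complex.cos, hw_def]
      simp only
      rw [← Complex.exp_neg]
      ring_nf
    rw [Complex.ofReal_div, Complex.ofReal_sub, hsinh, hcosh, hcos]
    have hwinv : z - (w k)⁻¹ = (z * w k - 1) * (w k)⁻¹ := by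
      rw [sub_mul, mul_inv_cancel_right₀ (hw0 k), one_mul]
    have hwinv' : z + (w k)⁻¹ = (z * w k + 1) * (w k)⁻¹ := by
      rw [add_mul, mul_inv_cancel_right₀ (hw0 k), one_mul]
    have h1 : z * w k - 1 ≠ 0 := by
      intro h
      apply hzwinv k hk'
      rw [hwinv, h, zero_mul]
    have hcne : ((z + z⁻¹) / 2 - (w k + (w k)⁻¹) / 2 : ℂ) ≠ 0 := by
      rw [← hcosh, ← hcos, ← Complex.ofReal_sub]
      exact Complex.ofReal_ne_zero.mpr (ne_of_gt hc)
    rw [hwinv, hwinv', mul_div_mul_right _ _ (inv_ne_zero (hw0 k)), div_eq_iff hcne]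
    field_simp [hzw k, h1, hw0 k, hz0]
    ring
  -- assemble
  have hmain : Real.sinh t * ∑ k ∈ Finset.range n,
      1 / (Real.cosh t - Real.cos (θ k))
      = n * (Real.exp β - 1) / (Real.exp β + 1) := by
    have hC : ((Real.sinh t * ∑ k ∈ Finset.range n,
        1 / (Real.cosh t - Real.cos (θ k)) : ℝ) : ℂ)
        = ((n * (Real.exp β - 1) / (Real.exp β + 1) : ℝ) : ℂ) := by
      rw [Complex.ofReal_mul, Complex.ofReal_sum, Finset.mul_sum]
      have step : ∀ k ∈ Finset.range n,
          ((Real.sinh t : ℂ) * ((1 / (Real.cosh t - Real.cos (θ k)) : ℝ) : ℂ))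
          = ((z + w k) / (z - w k) + (z + (w k)⁻¹) / (z - (w k)⁻¹)) / 2 := by
        intro k hk
        rw [← hterm k hk, ← Complex.ofReal_mul, mul_one_div]
      rw [Finset.sum_congr rfl step]
      have : ∑ k ∈ Finset.range n,
          ((z + w k) / (z - w k) + (z + (w k)⁻¹) / (z - (w k)⁻¹)) / 2
          = ((∑ k ∈ Finset.range n, (z + w k) / (z - w k))
            + ∑ k ∈ Finset.range n, (z + (w k)⁻¹) / (z - (w k)⁻¹)) / 2 := by
        rw [← Finset.sum_add_distrib, Finset.sum_div]
      rw [this, hF', hF, hzn, add_self_div_two]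
      push_cast
      ring
    exact_mod_cast hC
  have htanh : Real.tanh (β / 2) = (Real.exp β - 1) / (Real.exp β + 1) := by
    rw [Real.tanh_eq_sinh_div_cosh, Real.sinh_eq, Real.cosh_eq, Real.exp_neg]
    have hu : Real.exp (β / 2) * Real.exp (β / 2) = Real.exp β := by
      rw [← Real.exp_add]; congr 1; ring
    have hu0 : Real.exp (β / 2) ≠ 0 := Real.exp_ne_zero _
    have he1 : Real.exp β + 1 ≠ 0 := by positivity
    field_simp
    nlinarith [hu]
  have hsinht : Real.sinh t ≠ 0 := ne_of_gt (Real.sinh_pos_iff.mpr ht)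
  have final : ∑ k ∈ Finset.range n, 1 / (Real.cosh t - Real.cos (θ k))
      = n * Real.tanh (β / 2) / Real.sinh t := by
    rw [htanh]
    field_simp at hmain ⊢
    linarith [hmain]
  exact final
end

section
/- Let n ≥ 1. Then ∑_{k=0}^{n-1} 1 / (1 - cos((2k+1)π/n)) = n²/2. -/
open Real Finset

namespace SumInvAux

noncomputable def w (n : ℕ) : ℂ := Complex.exp (Real.pi * Complex.I / n)

lemma w_pow_n {n : ℕ} (hn : 1 ≤ n) : w n ^ n = -1 := by
  have hn0 : (n : ℂ) ≠ 0 := Nat.cast_ne_zero.mpr (by omega)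
  rw [w, ← Complex.exp_nat_mul]
  rw [show (n : ℂ) * (↑Real.pi * Complex.I / ↑n) = ↑Real.pi * Complex.I by field_simp]
  exact Complex.exp_pi_mul_I

lemma w_pow_2n {n : ℕ} (hn : 1 ≤ n) : w n ^ (2 * n) = 1 := by
  rw [mul_comm, pow_mul, w_pow_n hn]; norm_num

lemma w_pow_ne_one {n m : ℕ} (hm : 0 < m) (hmn : m < n) : w n ^ (2 * m) ≠ 1 := by
  have hn0 : (n : ℂ) ≠ 0 := Nat.cast_ne_zero.mpr (by omega)
  rw [w, ← Complex.exp_nat_mul]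
  intro h
  rw [Complex.exp_eq_one_iff] at h
  obtain ⟨t, ht⟩ := h
  have hne : (2 : ℂ) * ↑Real.pi * Complex.I ≠ 0 := by
    simp [Real.pi_ne_zero, Complex.I_ne_zero]
  have hπ : (Real.pi : ℂ) ≠ 0 := by exact_mod_cast Real.pi_ne_zero
  field_simp at ht
  have h1 : ((m : ℂ)) * (2 * ↑Real.pi * Complex.I) = ((t : ℂ) * n) * (2 * ↑Real.pi * Complex.I) := by
    push_cast at ht
    linear_combination (↑Real.pi * Complex.I) * ht
  have h2 : (m : ℂ) = (t : ℂ) * n := mul_right_cancel₀ hne h1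
  have h3 : (m : ℤ) = t * n := by exact_mod_cast h2
  have hm' : (0 : ℤ) < m := by exact_mod_cast hm
  have hmn' : (m : ℤ) < n := by exact_mod_cast hmn
  rcases le_or_gt t 0 with h | h
  · nlinarith
  · nlinarith

lemma sum_pow_lt {n m : ℕ} (hn : 1 ≤ n) (h1 : 0 < m) (h2 : m < n) :
    ∑ k ∈ range n, w n ^ ((2 * k + 1) * m) = 0 := by
  have : ∀ k, w n ^ ((2 * k + 1) * m) = w n ^ m * (w n ^ (2 * m)) ^ k := by
    intro k; rw [← pow_mul, ← pow_add]; congr 1; ring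
  simp_rw [this, ← Finset.mul_sum]
  rw [geom_sum_eq (w_pow_ne_one h1 h2)]
  have : (w n ^ (2 * m)) ^ n = 1 := by
    rw [← pow_mul, show 2 * m * n = (2 * n) * m by ring, pow_mul, w_pow_2n hn, one_pow]
  rw [this]
  simp

lemma sum_pow {n m : ℕ} (hn : 1 ≤ n) (h1 : 0 < m) (h2 : m < 2 * n) :
    ∑ k ∈ range n, w n ^ ((2 * k + 1) * m) = if m = n then -(n : ℂ) else 0 := by
  rcases lt_trichotomy m n with h | h | h
  · rw [if_neg (by omega), sum_pow_lt hn h1 h]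
  · subst h
    rw [if_pos rfl]
    have : ∀ k, w m ^ ((2 * k + 1) * m) = -1 := by
      intro k
      rw [show (2 * k + 1) * m = m * (2 * k + 1) by ring, pow_mul, w_pow_n h1,
        Odd.neg_one_pow ⟨k, by ring⟩]
    simp [this]
  · rw [if_neg (by omega)]
    have key : ∀ k, w n ^ ((2 * k + 1) * m) = -(w n ^ ((2 * k + 1) * (m - n))) := by
      intro k
      rw [show (2 * k + 1) * m = (2 * k + 1) * n + (2 * k + 1) * (m - n) by
        have : n ≤ m := le_of_lt h
        zify [this]; ring]
      rw [pow_add, show (2 * k + 1) * n = n * (2 * k + 1) by ring, pow_mul, w_pow_n hn,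
        Odd.neg_one_pow ⟨k, by ring⟩]
      ring
    simp_rw [key, Finset.sum_neg_distrib]
    rw [sum_pow_lt hn (by omega) (by omega), neg_zero]

lemma term_eq {n : ℕ} (hn : 1 ≤ n) (k : ℕ) :
    (1 : ℂ) / (1 - ((Real.cos ((2 * k + 1) * π / n) : ℝ) : ℂ)) =
      -(w n ^ (2 * k + 1) * (∑ j ∈ range n, (w n ^ (2 * k + 1)) ^ j) ^ 2) / 2 := by
  have hn0 : (n : ℂ) ≠ 0 := Nat.cast_ne_zero.mpr (by omega)
  set z : ℂ := w n ^ (2 * k + 1) with hzdef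
  set S : ℂ := ∑ j ∈ range n, z ^ j with hSdef
  have hz : z = Complex.exp ((((2 * k + 1) * π / n : ℝ)) * Complex.I) := by
    rw [hzdef, w, ← Complex.exp_nat_mul]
    congr 1
    push_cast
    field_simp
  have hz0 : z ≠ 0 := by rw [hz]; exact Complex.exp_ne_zero _
  have hzn : z ^ n = -1 := by
    rw [hzdef, ← pow_mul, mul_comm (2 * k + 1) n, pow_mul, w_pow_n hn,
      Odd.neg_one_pow ⟨k, by ring⟩]
  have hz1 : z ≠ 1 := by
    intro h
    rw [h, one_pow] at hzn
    exact (by norm_num : (1 : ℂ) ≠ -1) hzn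
  have hz1' : 1 - z ≠ 0 := sub_ne_zero.mpr (Ne.symm hz1)
  have hS : S = 2 / (1 - z) := by
    rw [eq_div_iff hz1']
    have gs := geom_sum_mul z n
    rw [hzn] at gs
    linear_combination -gs
  have hcos : ((Real.cos ((2 * k + 1) * π / n) : ℝ) : ℂ) = (z + z⁻¹) / 2 := by
    rw [Complex.ofReal_cos, Complex.cos, hz, ← Complex.exp_neg]
    ring_nf
  rw [hcos, hS]
  have hden : 1 - (z + z⁻¹) / 2 = -((1 - z) ^ 2 / (2 * z)) := by
    field_simp
    ring
  rw [hden]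
  field_simp

end SumInvAux

open SumInvAux

/-- For `n ≥ 1`, `∑_{k=0}^{n-1} 1/(1 - cos((2k+1)π/n)) = n²/2`. -/
theorem sum_inv_one_sub_cos {n : ℕ} (hn : 1 ≤ n) :
    ∑ k ∈ Finset.range n, 1 / (1 - Real.cos ((2 * k + 1) * π / n)) = (n : ℝ) ^ 2 / 2 := by
  apply Complex.ofReal_injective
  rw [Complex.ofReal_sum]
  have step1 : ∀ k ∈ Finset.range n,
      ((1 / (1 - Real.cos ((2 * k + 1) * π / n)) : ℝ) : ℂ) =
        -(w n ^ (2 * k + 1) * (∑ j ∈ Finset.range n, (w n ^ (2 * k + 1)) ^ j) ^ 2) / 2 := by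
    intro k _
    rw [Complex.ofReal_div, Complex.ofReal_sub, Complex.ofReal_one]
    exact term_eq hn k
  rw [Finset.sum_congr rfl step1]
  have expand : ∀ k : ℕ,
      w n ^ (2 * k + 1) * (∑ j ∈ Finset.range n, (w n ^ (2 * k + 1)) ^ j) ^ 2 =
        ∑ j ∈ Finset.range n, ∑ l ∈ Finset.range n, w n ^ ((2 * k + 1) * (j + l + 1)) := by
    intro k
    rw [sq, Finset.sum_mul_sum, Finset.mul_sum]
    refine Finset.sum_congr rfl fun j _ => ?_
    rw [Finset.mul_sum]
    refine Finset.sum_congr rfl fun l _ => ?_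
    rw [← pow_mul, ← pow_mul, ← pow_add, ← pow_add]
    congr 1
    ring
  simp_rw [expand]
  have swap : ∑ k ∈ Finset.range n, ∑ j ∈ Finset.range n, ∑ l ∈ Finset.range n,
      w n ^ ((2 * k + 1) * (j + l + 1)) = -((n : ℂ) * n) := by
    rw [Finset.sum_comm]
    have inner : ∀ j ∈ Finset.range n,
        ∑ k ∈ Finset.range n, ∑ l ∈ Finset.range n, w n ^ ((2 * k + 1) * (j + l + 1)) = -(n : ℂ) := by
      intro j hj
      rw [Finset.sum_comm]
      have hjn : j < n := Finset.mem_range.mp hj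
      have inner2 : ∀ l ∈ Finset.range n,
          ∑ k ∈ Finset.range n, w n ^ ((2 * k + 1) * (j + l + 1)) =
            if l = n - 1 - j then -(n : ℂ) else 0 := by
        intro l hl
        have hln : l < n := Finset.mem_range.mp hl
        rw [sum_pow hn (by omega) (by omega)]
        congr 1
        simp only [eq_iff_iff]
        omega
      rw [Finset.sum_congr rfl inner2, Finset.sum_ite_eq']
      rw [if_pos (Finset.mem_range.mpr (by omega))]
    rw [Finset.sum_congr rfl inner, Finset.sum_const, Finset.card_range]
    simp [mul_comm]
  have : ∑ k ∈ Finset.range n, -( ∑ j ∈ Finset.range n, ∑ l ∈ Finset.range n,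
      w n ^ ((2 * k + 1) * (j + l + 1))) / 2 =
      -(∑ k ∈ Finset.range n, ∑ j ∈ Finset.range n, ∑ l ∈ Finset.range n,
      w n ^ ((2 * k + 1) * (j + l + 1))) / 2 := by
    rw [← Finset.sum_neg_distrib, ← Finset.sum_div]
  rw [this, swap]
  push_cast
  ring
end

section
/- Let A be an n×n real Hurwitz matrix and P the unique solution of PA + AᵀP + I = 0 (Q = I). Then trace(P) = -∑_{i=1}^n 1/(2·Re(λ_i(A))) if and only if A is normal (AᵀA = AAᵀ). -/
open Matrix Polynomial ComplexOrder

set_option maxHeartbeats 4000000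

lemma lyap_uniq {n : ℕ} (T X : Matrix (Fin n) (Fin n) ℂ)
    (hT : ∀ i j : Fin n, (j:ℕ) < (i:ℕ) → T i j = 0)
    (hRe : ∀ i, (T i i).re < 0)
    (h : X * T + Tᴴ * X = 0) : X = 0 := by
  have key : ∀ m : ℕ, ∀ i j : Fin n, (i:ℕ) + (j:ℕ) = m → X i j = 0 := by
    intro m
    induction m using Nat.strong_induction_on with
    | _ m IH =>
      intro i j hm
      have h0 : (X * T + Tᴴ * X) i j = 0 := by rw [h]; rfl
      have e1 : ∑ k, X i k * T k j = X i j * T j j := by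
        apply Finset.sum_eq_single
        · intro k _ hk
          rcases lt_or_gt_of_ne (fun hc : (k:ℕ) = (j:ℕ) => hk (Fin.ext hc)) with hlt | hgt
          · rw [IH ((i:ℕ)+(k:ℕ)) (by omega) i k rfl, zero_mul]
          · rw [hT k j hgt, mul_zero]
        · intro hj; exact absurd (Finset.mem_univ j) hj
      have e2 : ∑ k, star (T k i) * X k j = star (T i i) * X i j := by
        apply Finset.sum_eq_single
        · intro k _ hk
          rcases lt_or_gt_of_ne (fun hc : (k:ℕ) = (i:ℕ) => hk (Fin.ext hc)) with hlt | hgt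
          · rw [IH ((k:ℕ)+(j:ℕ)) (by omega) k j rfl, mul_zero]
          · rw [hT k i hgt, star_zero, zero_mul]
        · intro hj; exact absurd (Finset.mem_univ i) hj
      rw [Matrix.add_apply, Matrix.mul_apply, Matrix.mul_apply] at h0
      simp only [Matrix.conjTranspose_apply] at h0
      rw [e1, e2] at h0
      have hfac : T j j + star (T i i) ≠ 0 := by
        intro hc
        have : (T j j + star (T i i)).re < 0 := by
          simp only [Complex.add_re, Complex.conj_re]
          have := hRe i; have := hRe j
          simp only [RCLike.star_def, Complex.conj_re]
          linarith
        rw [hc] at this; simp at this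
      have : (T j j + star (T i i)) * X i j = 0 := by ring_nf; ring_nf at h0; linear_combination h0
      rcases mul_eq_zero.mp this with hc | hx
      · exact absurd hc hfac
      · exact hx
  ext i j; exact key _ i j rfl

lemma lyap_herm {n : ℕ} (T S : Matrix (Fin n) (Fin n) ℂ)
    (hT : ∀ i j : Fin n, (j:ℕ) < (i:ℕ) → T i j = 0)
    (hRe : ∀ i, (T i i).re < 0)
    (hS : S * T + Tᴴ * S + 1 = 0) : S.IsHermitian := by
  have hSH : Sᴴ * T + Tᴴ * Sᴴ + 1 = 0 := by
    have h2 := congrArg conjTranspose hS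
    simp only [conjTranspose_add, conjTranspose_mul, conjTranspose_one, conjTranspose_zero,
      conjTranspose_conjTranspose] at h2
    calc Sᴴ * T + Tᴴ * Sᴴ + 1 = Tᴴ * Sᴴ + Sᴴ * T + 1 := by abel
    _ = 0 := h2
  have h0 : (Sᴴ - S) * T + Tᴴ * (Sᴴ - S) = 0 := by
    have : (Sᴴ - S) * T + Tᴴ * (Sᴴ - S) = (Sᴴ * T + Tᴴ * Sᴴ + 1) - (S * T + Tᴴ * S + 1) := by
      noncomm_ring
    rw [this, hSH, hS, sub_zero]
  have := lyap_uniq T (Sᴴ - S) hT hRe h0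
  rw [Matrix.IsHermitian]
  rw [sub_eq_zero] at this
  exact this

-- charpoly invariance under unitary conjugation

lemma lyap_step {n : ℕ} (T1 S1 : Matrix (Fin n) (Fin n) ℂ) (c s : Fin n → ℂ) (lam σc : ℂ)
    (hPD1 : S1.PosDef)
    (hS1eq : S1 * T1 + T1ᴴ * S1 + 1 = 0)
    (hlam : lam.re < 0) (hsig_im : σc.im = 0)
    (hvec : S1 *ᵥ c + lam • s + T1ᴴ *ᵥ s = 0)
    (hlasteq : dotProduct (star s) c + dotProduct (star c) s + σc * (lam + star lam) + 1 = 0) :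
    0 ≤ σc.re - (-(1/(2*lam.re))) ∧
    (σc.re - (-(1/(2*lam.re))) = 0 ↔ c = 0) ∧
    (∀ (y : Fin n → ℂ) (t : ℂ), ¬(y = 0 ∧ t = 0) →
      0 < dotProduct (star y) (S1 *ᵥ y) + t * dotProduct (star y) s
          + star t * dotProduct (star s) y + (star t * t) * σc) := by
  have hherm1 : S1.IsHermitian := hPD1.1
  have hdet1 : IsUnit S1.det := isUnit_iff_ne_zero.mpr (by exact_mod_cast hPD1.det_pos.ne')
  have hinv_mul : S1⁻¹ * S1 = 1 := Matrix.nonsing_inv_mul S1 hdet1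
  have hmul_inv : S1 * S1⁻¹ = 1 := Matrix.mul_nonsing_inv S1 hdet1
  have hPD1inv : S1⁻¹.PosDef := hPD1.inv
  have hinvherm : S1⁻¹.IsHermitian := hPD1inv.1
  have hS1w : S1 *ᵥ (S1⁻¹ *ᵥ s) = s := by
    rw [Matrix.mulVec_mulVec, hmul_inv, Matrix.one_mulVec]
  -- abbreviations (plain ℂ values)
  have hA := hPD1inv.posSemidef.dotProduct_mulVec_nonneg s   -- 0 ≤ star s ⬝ᵥ S1⁻¹ *ᵥ s
  set A : ℂ := dotProduct (star s) (S1⁻¹ *ᵥ s) with hAdef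
  set G : ℂ := dotProduct (star (S1⁻¹ *ᵥ s)) (S1⁻¹ *ᵥ s) with hGdef
  have hG : 0 ≤ G := dotProduct_star_self_nonneg _
  have hA_im : A.im = 0 := by
    rcases (Complex.le_def.mp hA) with ⟨_, h2⟩; simpa using h2.symm
  have hA_re : 0 ≤ A.re := by
    rcases (Complex.le_def.mp hA) with ⟨h1, _⟩; simpa using h1
  have hG_im : G.im = 0 := by
    rcases (Complex.le_def.mp hG) with ⟨_, h2⟩; simpa using h2.symm
  have hG_re : 0 ≤ G.re := by
    rcases (Complex.le_def.mp hG) with ⟨h1, _⟩; simpa using h1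
  have hA_star : star A = A := by
    rw [Complex.star_def, Complex.conj_eq_iff_im]; exact hA_im
  -- c in terms of s
  have hc_eq : c = -(lam • (S1⁻¹ *ᵥ s)) - S1⁻¹ *ᵥ (T1ᴴ *ᵥ s) := by
    have h1 : S1 *ᵥ c = -(lam • s) - T1ᴴ *ᵥ s := by
      have := hvec
      rw [add_assoc] at this
      have h2 := eq_neg_of_add_eq_zero_left this
      rw [h2]; rw [neg_add]; rfl
    have h3 : S1⁻¹ *ᵥ (S1 *ᵥ c) = c := by
      rw [Matrix.mulVec_mulVec, hinv_mul, Matrix.one_mulVec]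
    rw [← h3, h1]
    rw [Matrix.mulVec_sub, Matrix.mulVec_neg, Matrix.mulVec_smul]
  -- the middle identity
  have hmid : S1⁻¹ * T1ᴴ + T1 * S1⁻¹ = -(S1⁻¹ * S1⁻¹) := by
    have hS1' : S1 * T1 + T1ᴴ * S1 = -1 := by
      have := hS1eq
      have h2 := eq_neg_of_add_eq_zero_left this
      exact h2
    have step : T1 * S1⁻¹ + S1⁻¹ * T1ᴴ = S1⁻¹ * (S1 * T1 + T1ᴴ * S1) * S1⁻¹ := by
      calc T1 * S1⁻¹ + S1⁻¹ * T1ᴴ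
          = (S1⁻¹ * S1) * (T1 * S1⁻¹) + (S1⁻¹ * T1ᴴ) * (S1 * S1⁻¹) := by
            rw [hinv_mul, hmul_inv, Matrix.one_mul, Matrix.mul_one]
        _ = S1⁻¹ * (S1 * T1 + T1ᴴ * S1) * S1⁻¹ := by noncomm_ring
    rw [add_comm, step, hS1']
    simp [Matrix.mul_neg, Matrix.neg_mul]
  -- q and its conjugate
  set q : ℂ := dotProduct (star s) c with hqdef
  have hq_conj : dotProduct (star c) s = star q := by
    rw [hqdef, ← Matrix.star_dotProduct]
  set Bq : ℂ := dotProduct (star s) (S1⁻¹ *ᵥ (T1ᴴ *ᵥ s)) with hBqdef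
  have hq : q = -(lam * A) - Bq := by
    rw [hqdef, hc_eq]
    rw [dotProduct_sub, dotProduct_neg, dotProduct_smul]
    simp only [smul_eq_mul]
    try ring
    try rfl
  have hstarBq : star Bq = dotProduct (star s) ((T1 * S1⁻¹) *ᵥ s) := by
    rw [hBqdef, ← Matrix.star_dotProduct]
    rw [Matrix.mulVec_mulVec]
    rw [Matrix.star_mulVec, Matrix.conjTranspose_mul, Matrix.conjTranspose_conjTranspose,
      hinvherm.eq]
    rw [← Matrix.dotProduct_mulVec]
  have hG_eq : dotProduct (star s) ((S1⁻¹ * S1⁻¹) *ᵥ s) = G := by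
    rw [← Matrix.mulVec_mulVec, Matrix.dotProduct_mulVec, hGdef]
    congr 1
    rw [← hinvherm.eq, ← Matrix.star_mulVec]
    rw [hinvherm.eq]
  have hBq_sum : Bq + star Bq = -G := by
    rw [hstarBq, hBqdef]
    rw [Matrix.mulVec_mulVec]
    rw [← dotProduct_add, ← Matrix.add_mulVec, hmid]
    rw [Matrix.neg_mulVec, dotProduct_neg, hG_eq]
  have hqq : q + star q = -((lam + star lam) * A) + G := by
    rw [hq]
    rw [star_sub, star_neg, star_mul', hA_star]
    linear_combination (-1:ℂ) * hBq_sum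
  -- real-part bookkeeping
  have hl0 : lam.re ≠ 0 := ne_of_lt hlam
  have hls : lam + star lam = ((2*lam.re : ℝ) : ℂ) := by
    apply Complex.ext <;> simp [Complex.star_def] <;> ring
  have hl2 : q + star q + σc * (lam + star lam) + 1 = 0 := by
    rw [← hq_conj]; exact hlasteq
  have hre_last : 2*q.re + σc.re * (2*lam.re) + 1 = 0 := by
    have h0 := congrArg Complex.re hl2
    rw [hls] at h0
    simp only [Complex.add_re, Complex.mul_re, Complex.ofReal_re, Complex.ofReal_im,
      Complex.one_re, Complex.zero_re, hsig_im, Complex.star_def, Complex.conj_re] at h0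
    linarith
  have hq_re : 2*q.re = -(2*lam.re)*A.re + G.re := by
    have h0 := congrArg Complex.re hqq
    rw [hls] at h0
    simp only [Complex.add_re, Complex.neg_re, Complex.mul_re, Complex.ofReal_re,
      Complex.ofReal_im, hA_im, Complex.star_def, Complex.conj_re, mul_zero, sub_zero] at h0
    linarith
  have hdev : σc.re - (-(1/(2*lam.re))) = A.re + G.re / (-(2*lam.re)) := by
    field_simp
    nlinarith [hre_last, hq_re]
  have hlampos : 0 < -(2*lam.re) := by linarith
  have hdev_nonneg : 0 ≤ σc.re - (-(1/(2*lam.re))) := by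
    rw [hdev]
    exact add_nonneg hA_re (div_nonneg hG_re hlampos.le)
  refine ⟨hdev_nonneg, ⟨?_, ?_⟩, ?_⟩
  · -- equality implies c = 0
    intro h0
    rw [hdev] at h0
    have hdiv_nonneg : 0 ≤ G.re / (-(2*lam.re)) := div_nonneg hG_re hlampos.le
    have hGr0 : G.re = 0 := by
      have hAr0 : A.re = 0 := by linarith
      have : G.re / (-(2*lam.re)) = 0 := by linarith
      field_simp at this
      simpa using this
    have hG0 : G = 0 := by apply Complex.ext <;> simp [hGr0, hG_im]
    have hw0 : S1⁻¹ *ᵥ s = 0 := dotProduct_star_self_eq_zero.mp (hGdef ▸ hG0)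
    have hs0 : s = 0 := by rw [← hS1w, hw0, Matrix.mulVec_zero]
    rw [hc_eq, hs0]
    simp
  · -- c = 0 implies equality
    intro hc0
    have hq0 : q = 0 := by rw [hqdef, hc0, dotProduct_zero]
    rw [hq0] at hre_last
    simp only [Complex.zero_re, mul_zero, zero_add] at hre_last
    have : σc.re = -(1/(2*lam.re)) := by field_simp; linarith
    rw [this]; ring
  · -- positivity of the quadratic form
    intro y t hyt
    have hsw : dotProduct (star (S1⁻¹ *ᵥ s)) (S1 *ᵥ y) = dotProduct (star s) y := by
      rw [Matrix.dotProduct_mulVec]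
      congr 1
      rw [← hherm1.eq, ← Matrix.star_mulVec, hherm1.eq, hS1w]
    have hwA : dotProduct (star (S1⁻¹ *ᵥ s)) s = A := by
      rw [← hA_star, hAdef, ← Matrix.star_dotProduct]
    have hQ : dotProduct (star y) (S1 *ᵥ y) + t * dotProduct (star y) s
          + star t * dotProduct (star s) y + (star t * t) * σc
        = dotProduct (star (y + t • (S1⁻¹ *ᵥ s))) (S1 *ᵥ (y + t • (S1⁻¹ *ᵥ s)))
          + (star t * t) * (σc - A) := by
      rw [Matrix.mulVec_add, Matrix.mulVec_smul, hS1w]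
      rw [star_add, star_smul]
      rw [add_dotProduct, smul_dotProduct]
      rw [dotProduct_add, dotProduct_add]
      rw [dotProduct_smul, dotProduct_smul]
      rw [hsw, hwA]
      simp only [smul_eq_mul]
      ring
    rw [hQ]
    have hzero_le : 0 ≤ dotProduct (star (y + t • (S1⁻¹ *ᵥ s))) (S1 *ᵥ (y + t • (S1⁻¹ *ᵥ s))) :=
      hPD1.posSemidef.dotProduct_mulVec_nonneg _
    have hσA_re : 0 < (σc - A).re := by
      have h1 : σc.re - A.re = G.re / (-(2*lam.re)) + 1 / (-(2*lam.re)) := by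
        have := hdev
        field_simp at this ⊢
        nlinarith [this]
      simp only [Complex.sub_re]
      rw [h1]
      have : 0 < 1 / (-(2*lam.re)) := by positivity
      have h2 : 0 ≤ G.re / (-(2*lam.re)) := div_nonneg hG_re hlampos.le
      linarith
    have hσA_im : (σc - A).im = 0 := by simp [hsig_im, hA_im]
    by_cases ht : t = 0
    · have hy : y ≠ 0 := by
        intro hy0; exact hyt ⟨hy0, ht⟩
      have hpos := hPD1.dotProduct_mulVec_pos hy
      rw [ht]
      simp only [star_zero, zero_mul, mul_zero, zero_smul, add_zero, zero_add]
      simpa using hpos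
    · have htt : star t * t = ((Complex.normSq t : ℝ) : ℂ) := by
        rw [Complex.star_def, ← Complex.normSq_eq_conj_mul_self]
      have htpos : 0 < Complex.normSq t := Complex.normSq_pos.mpr ht
      have hprod : 0 < (star t * t) * (σc - A) := by
        rw [htt]
        rw [Complex.lt_def]
        constructor
        · simp only [Complex.zero_re, Complex.mul_re, Complex.ofReal_re, Complex.ofReal_im,
            zero_mul, hσA_im, mul_zero, sub_zero]
          exact mul_pos htpos hσA_re
        · simp [hσA_im]
      rcases Complex.le_def.mp hzero_le with ⟨h1, h2⟩
      rcases Complex.lt_def.mp hprod with ⟨h3, h4⟩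
      rw [Complex.lt_def]
      constructor
      · simp only [Complex.zero_re, Complex.add_re]
        simp only [Complex.zero_re] at h1 h3
        linarith
      · simp only [Complex.zero_im, Complex.add_im]
        simp only [Complex.zero_im] at h2 h4
        rw [← h2, ← h4]; ring

lemma lyap_main : ∀ (n : ℕ) (T S : Matrix (Fin n) (Fin n) ℂ),
    (∀ i j : Fin n, (j:ℕ) < (i:ℕ) → T i j = 0) →
    (∀ i, (T i i).re < 0) →
    S * T + Tᴴ * S + 1 = 0 →
    S.PosDef ∧ 0 ≤ (∑ i, (S i i).re) - (∑ i, -(1 / (2 * (T i i).re))) ∧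
      ((∑ i, (S i i).re) - (∑ i, -(1 / (2 * (T i i).re))) = 0 ↔
        ∀ i j : Fin n, i ≠ j → T i j = 0) := by
  intro n
  induction n with
  | zero =>
    intro T S _ _ _
    refine ⟨⟨?_, ?_⟩, ?_, ?_⟩
    · ext i j; exact Fin.elim0 i
    · intro x hx; exact absurd (Finsupp.ext fun i => Fin.elim0 i) hx
    · simp
    · simp only [Finset.univ_eq_empty, Finset.sum_empty, sub_zero]
      constructor
      · intro _ i; exact Fin.elim0 i
      · intro _; trivial
  | succ n IH =>
    intro T S hT hRe hS
    have hherm : S.IsHermitian := lyap_herm T S hT hRe hS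
    have happly : ∀ i j, star (S j i) = S i j := fun i j => hherm.apply i j
    have hent : ∀ i j : Fin (n+1), (∑ k, S i k * T k j) + (∑ k, star (T k i) * S k j)
        + (if i = j then (1:ℂ) else 0) = 0 := by
      intro i j
      have h0 : (S * T + Tᴴ * S + 1) i j = (0 : Matrix (Fin (n+1)) (Fin (n+1)) ℂ) i j := by
        rw [hS]
      simpa [Matrix.add_apply, Matrix.mul_apply, Matrix.conjTranspose_apply,
        Matrix.one_apply] using h0
    set T1 : Matrix (Fin n) (Fin n) ℂ := T.submatrix Fin.castSucc Fin.castSucc with hT1def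
    set S1 : Matrix (Fin n) (Fin n) ℂ := S.submatrix Fin.castSucc Fin.castSucc with hS1def
    have hT1 : ∀ i j : Fin n, (j:ℕ) < (i:ℕ) → T1 i j = 0 := by
      intro i j hij; exact hT i.castSucc j.castSucc (by simpa using hij)
    have hRe1 : ∀ i, (T1 i i).re < 0 := fun i => hRe i.castSucc
    have hclast : ∀ i : Fin n, i.castSucc ≠ Fin.last n := fun i => (Fin.castSucc_lt_last i).ne
    have htri_last : ∀ j : Fin n, T (Fin.last n) j.castSucc = 0 :=
      fun j => hT _ _ (by simpa using j.isLt)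
    have hS1eq : S1 * T1 + T1ᴴ * S1 + 1 = 0 := by
      ext i j
      have h0 := hent i.castSucc j.castSucc
      rw [Fin.sum_univ_castSucc (f := fun k => S i.castSucc k * T k j.castSucc),
        Fin.sum_univ_castSucc (f := fun k => star (T k i.castSucc) * S k j.castSucc)] at h0
      rw [htri_last j, htri_last i] at h0
      simp only [mul_zero, star_zero, zero_mul, add_zero, Fin.castSucc_inj] at h0
      simp only [Matrix.add_apply, Matrix.mul_apply, Matrix.conjTranspose_apply,
        Matrix.one_apply, Matrix.zero_apply, hT1def, hS1def, Matrix.submatrix_apply]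
      convert h0 using 2
    obtain ⟨hPD1, hineq1, hiff1⟩ := IH T1 S1 hT1 hRe1 hS1eq
    set lam : ℂ := T (Fin.last n) (Fin.last n) with hlamdef
    set σc : ℂ := S (Fin.last n) (Fin.last n) with hsigdef
    set c : Fin n → ℂ := fun i => T i.castSucc (Fin.last n) with hcdef
    set s : Fin n → ℂ := fun i => S i.castSucc (Fin.last n) with hsdef
    have hlam : lam.re < 0 := hRe (Fin.last n)
    have hsig_im : σc.im = 0 := by
      have := happly (Fin.last n) (Fin.last n)
      rw [← hsigdef] at this
      rw [Complex.star_def, Complex.conj_eq_iff_im] at this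
      exact this
    have hvec : S1 *ᵥ c + lam • s + T1ᴴ *ᵥ s = 0 := by
      funext i
      have h0 := hent i.castSucc (Fin.last n)
      rw [Fin.sum_univ_castSucc (f := fun k => S i.castSucc k * T k (Fin.last n)),
        Fin.sum_univ_castSucc (f := fun k => star (T k i.castSucc) * S k (Fin.last n))] at h0
      rw [htri_last i] at h0
      simp only [star_zero, zero_mul, add_zero, if_neg (hclast i)] at h0
      simp only [Pi.add_apply, Pi.smul_apply, Matrix.mulVec, dotProduct, smul_eq_mul,
        Matrix.conjTranspose_apply, hT1def, hS1def, hcdef, hsdef, hlamdef,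
        Matrix.submatrix_apply, Pi.zero_apply]
      linear_combination h0
    have hlasteq : dotProduct (star s) c + dotProduct (star c) s + σc * (lam + star lam)
        + 1 = 0 := by
      have h0 := hent (Fin.last n) (Fin.last n)
      rw [Fin.sum_univ_castSucc (f := fun k => S (Fin.last n) k * T k (Fin.last n)),
        Fin.sum_univ_castSucc (f := fun k => star (T k (Fin.last n)) * S k (Fin.last n))] at h0
      simp only [if_pos rfl, if_true] at h0
      have e1 : dotProduct (star s) c = ∑ k : Fin n,
          S (Fin.last n) k.castSucc * T k.castSucc (Fin.last n) := by
        simp only [dotProduct, Pi.star_apply, hsdef, hcdef]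
        exact Finset.sum_congr rfl fun k _ => by rw [happly]
      have e2 : dotProduct (star c) s = ∑ k : Fin n,
          star (T k.castSucc (Fin.last n)) * S k.castSucc (Fin.last n) := by
        simp only [dotProduct, Pi.star_apply, hsdef, hcdef]
      rw [e1, e2, hsigdef, hlamdef]
      linear_combination h0
    obtain ⟨hdev_nonneg, hdev_iff, hquad⟩ :=
      lyap_step T1 S1 c s lam σc hPD1 hS1eq hlam hsig_im hvec hlasteq
    have htr : ∑ i : Fin (n+1), (S i i).re = (∑ i : Fin n, (S1 i i).re) + σc.re := by
      rw [Fin.sum_univ_castSucc (f := fun i => (S i i).re)]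
      simp [hS1def, hsigdef]
    have hsum2 : ∑ i : Fin (n+1), -(1/(2*(T i i).re))
        = (∑ i : Fin n, -(1/(2*(T1 i i).re))) + -(1/(2*lam.re)) := by
      rw [Fin.sum_univ_castSucc (f := fun i => -(1/(2*(T i i).re)))]
      simp [hT1def, hlamdef]
    have hPD : S.PosDef := by
      refine Matrix.PosDef.of_dotProduct_mulVec_pos hherm ?_
      intro x hx
      set y : Fin n → ℂ := fun i => x i.castSucc with hydef
      set t : ℂ := x (Fin.last n) with htdef
      have hE0 : dotProduct (star x) (S *ᵥ x)
          = dotProduct (star y) (S1 *ᵥ y) + t * dotProduct (star y) s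
            + star t * dotProduct (star s) y + (star t * t) * σc := by
        calc dotProduct (star x) (S *ᵥ x)
            = ∑ i : Fin (n+1), star (x i) * (∑ j : Fin (n+1), S i j * x j) := rfl
          _ = (∑ i : Fin n, star (y i) * ((∑ j : Fin n, S1 i j * y j) + s i * t))
              + star t * ((∑ j : Fin n, star (s j) * y j) + σc * t) := by
              rw [Fin.sum_univ_castSucc
                (f := fun i => star (x i) * (∑ j : Fin (n+1), S i j * x j))]
              congr 1
              · apply Finset.sum_congr rfl
                intro i _
                rw [Fin.sum_univ_castSucc (f := fun j => S i.castSucc j * x j)]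
                simp [hS1def, hydef, hsdef, htdef]
              · rw [Fin.sum_univ_castSucc (f := fun j => S (Fin.last n) j * x j)]
                rw [Finset.sum_congr rfl (fun j _ => by
                  rw [show S (Fin.last n) j.castSucc = star (s j) from by
                    rw [hsdef]; exact (happly _ _).symm])]
          _ = dotProduct (star y) (S1 *ᵥ y) + t * dotProduct (star y) s
              + star t * dotProduct (star s) y + (star t * t) * σc := by
              simp only [dotProduct, Matrix.mulVec, Pi.star_apply]
              simp only [mul_add, Finset.sum_add_distrib]
              rw [show (∑ i : Fin n, star (y i) * (s i * t))
                  = (∑ i : Fin n, star (y i) * s i) * t from by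
                rw [Finset.sum_mul]
                exact Finset.sum_congr rfl fun i _ => by ring]
              ring
      rw [hE0]
      apply hquad
      rintro ⟨hy0, ht0⟩
      apply hx
      funext i
      induction i using Fin.lastCases with
      | last => exact ht0
      | cast i => exact congrFun hy0 i
    refine ⟨hPD, ?_, ?_⟩
    · rw [htr, hsum2]
      linarith [hineq1, hdev_nonneg]
    · rw [htr, hsum2]
      constructor
      · intro h0
        have h1 : (∑ i : Fin n, (S1 i i).re) - ∑ i : Fin n, -(1/(2*(T1 i i).re)) = 0 := by
          linarith [hineq1, hdev_nonneg]
        have h2 : σc.re - (-(1/(2*lam.re))) = 0 := by linarith [hineq1, hdev_nonneg]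
        have hTd1 := hiff1.mp h1
        have hc0 := hdev_iff.mp h2
        intro i j hij
        induction i using Fin.lastCases with
        | last =>
          induction j using Fin.lastCases with
          | last => exact absurd rfl hij
          | cast j => exact htri_last j
        | cast i =>
          induction j using Fin.lastCases with
          | last =>
            have := congrFun hc0 i
            simpa [hcdef] using this
          | cast j =>
            exact hTd1 i j (fun h => hij (by rw [h]))
      · intro hdiag
        have hTd1 : ∀ i j : Fin n, i ≠ j → T1 i j = 0 := by
          intro i j hij
          have : T i.castSucc j.castSucc = 0 :=
            hdiag i.castSucc j.castSucc (fun h => hij (Fin.castSucc_inj.mp h))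
          simpa [hT1def] using this
        have hc0 : c = 0 := by
          funext i
          have : T i.castSucc (Fin.last n) = 0 := hdiag i.castSucc (Fin.last n) (hclast i)
          simpa [hcdef] using this
        have h1 := hiff1.mpr hTd1
        have h2 := hdev_iff.mpr hc0
        linarith

lemma charpoly_unitary_conj {n : ℕ} (U B : Matrix (Fin n) (Fin n) ℂ)
    (hU : Uᴴ * U = 1) : (Uᴴ * B * U).charpoly = B.charpoly := by
  have hmap : (Uᴴ.map C) * (U.map C) = 1 := by
    rw [← Matrix.map_mul, hU]; simp
  have hcm : charmatrix (Uᴴ * B * U) = (Uᴴ.map C) * charmatrix B * (U.map C) := by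
    unfold charmatrix
    rw [Matrix.mul_sub, Matrix.sub_mul]
    congr 1
    · -- (Uᴴ.map C) * scalar X * (U.map C) = scalar X
      rw [← scalar_commute X (fun r' => Commute.all X r') (Uᴴ.map C)]
      rw [Matrix.mul_assoc, hmap, Matrix.mul_one]
    · simp only [RingHom.mapMatrix_apply, Matrix.map_mul]
  rw [Matrix.charpoly, Matrix.charpoly, hcm, Matrix.det_mul, Matrix.det_mul]
  have : (Uᴴ.map C).det * (U.map C).det = 1 := by
    rw [← Matrix.det_mul, hmap, Matrix.det_one]
  calc (Uᴴ.map C).det * (charmatrix B).det * (U.map C).det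
      = ((Uᴴ.map C).det * (U.map C).det) * (charmatrix B).det := by ring
    _ = (charmatrix B).det := by rw [this, one_mul]

lemma tri_roots {n : ℕ} (T : Matrix (Fin n) (Fin n) ℂ)
    (hT : ∀ i j : Fin n, (j:ℕ) < (i:ℕ) → T i j = 0) :
    T.charpoly.roots = Finset.univ.val.map (fun i => T i i) := by
  have hbt : T.BlockTriangular id := by
    intro i j hij; exact hT i j (by exact_mod_cast hij)
  rw [Matrix.charpoly_of_upperTriangular T hbt]
  have : (∏ i : Fin n, (X - C (T i i))) =
      ((Finset.univ.val.map (fun i => T i i)).map (fun a => X - C a)).prod := by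
    rw [Multiset.map_map]
    rfl
  rw [this, Polynomial.roots_multiset_prod_X_sub_C]

-- upper triangular + normal → diagonal

lemma tri_normal_diag {n : ℕ} (T : Matrix (Fin n) (Fin n) ℂ)
    (hT : ∀ i j : Fin n, (j:ℕ) < (i:ℕ) → T i j = 0)
    (hN : Tᴴ * T = T * Tᴴ) : ∀ i j : Fin n, i ≠ j → T i j = 0 := by
  have key : ∀ m : ℕ, ∀ i : Fin n, (i:ℕ) = m → ∀ j, j ≠ i → T i j = 0 := by
    intro m
    induction m using Nat.strong_induction_on with
    | _ m IH =>
      intro i him j hj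
      -- diagonal entry comparison
      have hdd : (Tᴴ * T) i i = (T * Tᴴ) i i := by rw [hN]
      rw [Matrix.mul_apply, Matrix.mul_apply] at hdd
      simp only [Matrix.conjTranspose_apply] at hdd
      have hL : ∑ k, star (T k i) * T k i = star (T i i) * T i i := by
        apply Finset.sum_eq_single
        · intro k _ hk
          rcases lt_or_gt_of_ne (fun hc : (k:ℕ) = (i:ℕ) => hk (Fin.ext hc)) with hlt | hgt
          · rw [IH (k:ℕ) (by omega) k rfl i (Ne.symm hk)]
            simp
          · rw [hT k i hgt]; simp
        · intro hi; exact absurd (Finset.mem_univ i) hi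
      rw [hL] at hdd
      -- now ∑ k, T i k * star (T i k) = |T i i|^2; all terms nonneg
      have hre : ∑ k, Complex.normSq (T i k) = Complex.normSq (T i i) := by
        have h1 : star (T i i) * T i i = (Complex.normSq (T i i) : ℂ) := by
          rw [Complex.star_def, ← Complex.normSq_eq_conj_mul_self]
        have h2 : ∀ k, T i k * star (T i k) = (Complex.normSq (T i k) : ℂ) := fun k => by
          rw [Complex.star_def, Complex.mul_conj]
        rw [h1] at hdd
        have : (∑ k, (Complex.normSq (T i k) : ℂ)) = (Complex.normSq (T i i) : ℂ) :=
          (Finset.sum_congr rfl (fun k _ => (h2 k).symm)).trans hdd.symm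
        exact_mod_cast this
      have hsplit : ∑ k, Complex.normSq (T i k) =
          Complex.normSq (T i i) + ∑ k ∈ Finset.univ.erase i, Complex.normSq (T i k) := by
        rw [add_comm, Finset.sum_erase_add]
        exact Finset.mem_univ i
      have hzero : ∑ k ∈ Finset.univ.erase i, Complex.normSq (T i k) = 0 := by
        have := hre
        rw [hsplit] at this
        linarith
      have : Complex.normSq (T i j) = 0 := by
        have hjmem : j ∈ Finset.univ.erase i := Finset.mem_erase.mpr ⟨hj, Finset.mem_univ j⟩
        have hnn : ∀ k ∈ Finset.univ.erase i, (0:ℝ) ≤ Complex.normSq (T i k) :=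
          fun k _ => Complex.normSq_nonneg _
        exact (Finset.sum_eq_zero_iff_of_nonneg hnn).mp hzero j hjmem
      exact Complex.normSq_eq_zero.mp this
  intro i j hij
  exact key (i:ℕ) i rfl j (Ne.symm hij)

-- diagonal matrix is normal

lemma diag_normal {n : ℕ} (T : Matrix (Fin n) (Fin n) ℂ)
    (hd : ∀ i j : Fin n, i ≠ j → T i j = 0) : Tᴴ * T = T * Tᴴ := by
  ext i j
  rw [Matrix.mul_apply, Matrix.mul_apply]
  simp only [Matrix.conjTranspose_apply]
  by_cases hij : i = j
  · subst hij
    apply Finset.sum_congr rfl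
    intro k _
    by_cases hk : k = i
    · subst hk; ring
    · rw [hd k i hk, hd i k (fun h => hk h.symm)]; simp
  · have e1 : ∑ k, star (T k i) * T k j = 0 := by
      apply Finset.sum_eq_zero
      intro k _
      by_cases hk : k = i
      · rw [hk, hd i j hij]; simp
      · rw [hd k i hk]; simp
    have e2 : ∑ k, T i k * star (T j k) = 0 := by
      apply Finset.sum_eq_zero
      intro k _
      by_cases hk : k = i
      · rw [hk, hd j i (fun h => hij h.symm)]; simp
      · rw [hd i k (fun h => hk h.symm)]; simp
    rw [e1, e2]

lemma schur : ∀ (n : ℕ) (B : Matrix (Fin n) (Fin n) ℂ), ∃ U T : Matrix (Fin n) (Fin n) ℂ,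
    Uᴴ * U = 1 ∧ Uᴴ * B * U = T ∧ (∀ i j : Fin n, (j:ℕ) < (i:ℕ) → T i j = 0) := by
  intro n
  induction n with
  | zero =>
    intro B
    refine ⟨1, B, by simp, by simp, fun i j _ => Fin.elim0 i⟩
  | succ n IH =>
    intro B
    -- find an eigenvalue
    have hmonic := B.charpoly_monic
    have hdeg : B.charpoly.degree ≠ 0 := by
      rw [Polynomial.degree_eq_natDegree hmonic.ne_zero, Matrix.charpoly_natDegree_eq_dim]
      simp only [Fintype.card_fin]
      intro hcontra
      have : ((n+1 : ℕ) : WithBot ℕ) = ((0:ℕ) : WithBot ℕ) := by exact_mod_cast hcontra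
      have h2 : (n+1 : ℕ) = 0 := Nat.cast_injective this
      omega
    obtain ⟨μ, hμ⟩ := IsAlgClosed.exists_root B.charpoly hdeg
    have hdet : (Matrix.scalar (Fin (n+1)) μ - B).det = 0 := by
      have h1 : Polynomial.eval μ B.charpoly = 0 := hμ
      rw [Matrix.charpoly, _root_.eval_det, matPolyEquiv_charmatrix] at h1
      rwa [Polynomial.eval_sub, Polynomial.eval_X, Polynomial.eval_C] at h1
    obtain ⟨v, hv0, hv⟩ := (Matrix.exists_mulVec_eq_zero_iff).mpr hdet
    have heig : B *ᵥ v = μ • v := by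
      rw [Matrix.sub_mulVec] at hv
      have h2 : (Matrix.scalar (Fin (n+1)) μ) *ᵥ v = μ • v := by
        funext i
        simp [Matrix.mulVec_diagonal, Matrix.scalar]
      rw [h2] at hv
      exact (sub_eq_zero.mp hv).symm
    -- normalize and extend to an orthonormal basis
    classical
    let E := EuclideanSpace ℂ (Fin (n+1))
    let v' : E := WithLp.toLp 2 v
    have hv0' : v' ≠ 0 := by show WithLp.toLp 2 v ≠ 0; simpa using hv0
    let u : E := ‖v'‖⁻¹ • v'
    have hunorm : ‖u‖ = 1 := norm_smul_inv_norm hv0'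
    have heigu : B *ᵥ (u : Fin (n+1) → ℂ) = μ • (u : Fin (n+1) → ℂ) := by
      show B *ᵥ (WithLp.ofLp (‖v'‖⁻¹ • v')) = μ • WithLp.ofLp (‖v'‖⁻¹ • v')
      simp only [v', WithLp.ofLp_smul, WithLp.ofLp_toLp]
      rw [← Complex.coe_smul, WithLp.ofLp_smul, WithLp.ofLp_toLp, Matrix.mulVec_smul]
      rw [heig]
      rw [smul_comm]
    have horth : Orthonormal ℂ (({(0 : Fin (n+1))} : Set (Fin (n+1))).restrict
        (fun _ : Fin (n+1) => u)) := by
      constructor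
      · intro i; exact hunorm
      · intro i j hij
        exact absurd (Subtype.ext (by
          have hi := i.2
          have hj := j.2
          simp only [Set.mem_singleton_iff] at hi hj
          rw [hi, hj])) hij
    have hcard : Module.finrank ℂ E = Fintype.card (Fin (n+1)) := by
      simp [E]
    obtain ⟨b, hb⟩ := horth.exists_orthonormalBasis_extension_of_card_eq hcard
    have hb0 : b 0 = u := hb 0 rfl
    let U : Matrix (Fin (n+1)) (Fin (n+1)) ℂ := Matrix.of fun i j => (b j : Fin (n+1) → ℂ) i
    have hinner : ∀ i j : Fin (n+1),
        (∑ k, star ((b i : Fin (n+1) → ℂ) k) * (b j : Fin (n+1) → ℂ) k)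
          = if i = j then (1:ℂ) else 0 := by
      intro i j
      have h1 : (inner ℂ (b i) (b j) : ℂ) = if i = j then (1:ℂ) else 0 :=
        orthonormal_iff_ite.mp b.orthonormal i j
      rw [← h1, EuclideanSpace.inner_eq_star_dotProduct]
      exact Finset.sum_congr rfl fun k _ => mul_comm _ _
    have hU : Uᴴ * U = 1 := by
      ext i j
      rw [Matrix.mul_apply, Matrix.one_apply]
      simp only [Matrix.conjTranspose_apply, U, Matrix.of_apply]
      exact hinner i j
    have hcol : ∀ i : Fin (n+1), (Uᴴ * B * U) i 0 = μ * (if i = 0 then 1 else 0) := by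
      intro i
      have hBU : ∀ k, (B * U) k 0 = μ * (b 0 : Fin (n+1) → ℂ) k := by
        intro k
        rw [Matrix.mul_apply]
        have h1 : (B *ᵥ (b 0 : Fin (n+1) → ℂ)) k = (μ • (b 0 : Fin (n+1) → ℂ)) k := by
          rw [hb0]; rw [heigu]
        simpa [Matrix.mulVec, dotProduct, U] using h1
      rw [Matrix.mul_assoc, Matrix.mul_apply]
      calc ∑ k, (Uᴴ) i k * (B*U) k 0
          = ∑ k, star ((b i : Fin (n+1) → ℂ) k) * (μ * (b 0 : Fin (n+1) → ℂ) k) := by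
            apply Finset.sum_congr rfl
            intro k _
            rw [hBU k]
            simp [Matrix.conjTranspose_apply, U]
        _ = μ * ∑ k, star ((b i : Fin (n+1) → ℂ) k) * (b 0 : Fin (n+1) → ℂ) k := by
            rw [Finset.mul_sum]
            apply Finset.sum_congr rfl
            intro k _
            ring
        _ = μ * (if i = 0 then 1 else 0) := by rw [hinner i 0]
    -- the lower-right block
    set B1 : Matrix (Fin n) (Fin n) ℂ :=
      Matrix.of (fun i j : Fin n => (Uᴴ * B * U) i.succ j.succ) with hB1def
    obtain ⟨V, T1, hV, hVT, htri1⟩ := IH B1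
    -- the block-diagonal unitary 1 ⊕ V
    set W : Matrix (Fin (n+1)) (Fin (n+1)) ℂ :=
      Matrix.of (fun i j : Fin (n+1) =>
        Fin.cases (Fin.cases (1:ℂ) (fun _ => 0) j)
          (fun i' => Fin.cases (0:ℂ) (fun j' => V i' j') j) i) with hWdef
    have hW00 : W 0 0 = 1 := rfl
    have hW0s : ∀ j : Fin n, W 0 j.succ = 0 := fun j => rfl
    have hWs0 : ∀ i : Fin n, W i.succ 0 = 0 := fun i => rfl
    have hWss : ∀ i j : Fin n, W i.succ j.succ = V i j := fun i j => rfl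
    have hWW : Wᴴ * W = 1 := by
      ext i j
      rw [Matrix.mul_apply, Fin.sum_univ_succ]
      simp only [Matrix.conjTranspose_apply]
      induction i using Fin.cases with
      | zero =>
        induction j using Fin.cases with
        | zero => simp [hW00, hWs0, Matrix.one_apply]
        | succ j => simp [hW00, hW0s, hWs0, hWss, Matrix.one_apply, Ne.symm (Fin.succ_ne_zero j)]
      | succ i =>
        induction j using Fin.cases with
        | zero => simp [hW00, hW0s, hWs0, hWss, Matrix.one_apply, (Fin.succ_ne_zero i).symm,
            Fin.succ_ne_zero]
        | succ j =>
          have h1 := congrFun (congrFun hV i) j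
          rw [Matrix.mul_apply] at h1
          simp only [Matrix.conjTranspose_apply] at h1
          simp only [hW0s, hWss, star_zero, zero_mul, zero_add, Matrix.one_apply,
            Fin.succ_inj]
          rw [h1]
          simp [Matrix.one_apply]
    refine ⟨U * W, Wᴴ * (Uᴴ * B * U) * W, ?_, by rw [Matrix.conjTranspose_mul]; noncomm_ring, ?_⟩
    · rw [Matrix.conjTranspose_mul]
      calc Wᴴ * Uᴴ * (U * W) = Wᴴ * (Uᴴ * U) * W := by noncomm_ring
        _ = Wᴴ * W := by rw [hU]; noncomm_ring
        _ = 1 := hWW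
    · -- triangularity
      intro i j hij
      have hentry : (Wᴴ * (Uᴴ * B * U) * W) i j
          = ∑ l, (∑ k, star (W k i) * (Uᴴ * B * U) k l) * W l j := by
        rw [Matrix.mul_apply]
        apply Finset.sum_congr rfl
        intro l _
        rw [Matrix.mul_apply]
        simp [Matrix.conjTranspose_apply]
      rw [hentry]
      clear hentry
      induction i using Fin.cases with
      | zero => simp at hij
      | succ i' =>
        induction j using Fin.cases with
        | zero =>
          apply Finset.sum_eq_zero
          intro l _
          induction l using Fin.cases with
          | zero =>
            have hin : (∑ k, star (W k i'.succ) * (Uᴴ * B * U) k 0) = 0 := by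
              apply Finset.sum_eq_zero
              intro k _
              induction k using Fin.cases with
              | zero => rw [hW0s i', star_zero, zero_mul]
              | succ k' =>
                rw [hcol k'.succ, if_neg (Fin.succ_ne_zero k'), mul_zero, mul_zero]
            rw [hin, zero_mul]
          | succ l' => rw [hWs0 l', mul_zero]
        | succ j' =>
          have hlt : (j' : ℕ) < (i' : ℕ) := by
            simp only [Fin.lt_def, Fin.val_succ] at hij
            omega
          calc ∑ l, (∑ k, star (W k i'.succ) * (Uᴴ * B * U) k l) * W l (Fin.succ j')
              = ∑ l' : Fin n, (∑ k, star (W k i'.succ) * (Uᴴ * B * U) k l'.succ) * V l' j' := by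
                rw [Fin.sum_univ_succ]
                rw [hW0s j', mul_zero, zero_add]
                apply Finset.sum_congr rfl
                intro l' _
                rw [hWss]
            _ = ∑ l' : Fin n, (∑ k' : Fin n, star (V k' i') * B1 k' l') * V l' j' := by
                apply Finset.sum_congr rfl
                intro l' _
                congr 1
                rw [Fin.sum_univ_succ]
                rw [hW0s i', star_zero, zero_mul, zero_add]
                apply Finset.sum_congr rfl
                intro k' _
                rw [hWss]
                rfl
            _ = (Vᴴ * B1 * V) i' j' := by
                rw [Matrix.mul_apply]
                apply Finset.sum_congr rfl
                intro l' _
                rw [Matrix.mul_apply]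
                simp [Matrix.conjTranspose_apply]
            _ = T1 i' j' := by rw [hVT]
            _ = 0 := htri1 i' j' hlt

/-- For `A` Hurwitz and `P` the unique solution of `P·A + Aᵀ·P + I = 0`,
`trace(P) = -∑ᵢ 1/(2 Re λᵢ(A))` holds if and only if `A` is normal. -/
theorem trace_lyapunov_eq_iff_normal {n : ℕ} (A P : Matrix (Fin n) (Fin n) ℝ)
    (hHurwitz : ∀ μ ∈ (A.map (Complex.ofReal)).charpoly.roots, μ.re < 0)
    (hP : P * A + Aᵀ * P + 1 = 0) :
    P.trace = -((A.map (Complex.ofReal)).charpoly.roots.map (fun μ => 1 / (2 * μ.re))).sum ↔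
      Aᵀ * A = A * Aᵀ := by
  set B : Matrix (Fin n) (Fin n) ℂ := A.map Complex.ofReal with hBdef
  set Pc : Matrix (Fin n) (Fin n) ℂ := P.map Complex.ofReal with hPcdef
  have hmapmul : ∀ M N : Matrix (Fin n) (Fin n) ℝ,
      (M * N).map Complex.ofReal = M.map Complex.ofReal * N.map Complex.ofReal := by
    intro M N
    ext i j
    simp [Matrix.map_apply, Matrix.mul_apply]
  have hBH : Bᴴ = Aᵀ.map Complex.ofReal := by
    ext i j
    simp [hBdef, Matrix.conjTranspose_apply, Matrix.map_apply, Matrix.transpose_apply,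
      Complex.star_def, Complex.conj_ofReal]
  have hPc : Pc * B + Bᴴ * Pc + 1 = 0 := by
    have h0 := congrArg (fun M : Matrix (Fin n) (Fin n) ℝ => M.map Complex.ofReal) hP
    have hadd : ∀ M N : Matrix (Fin n) (Fin n) ℝ,
        (M + N).map Complex.ofReal = M.map Complex.ofReal + N.map Complex.ofReal := by
      intro M N; ext i j; simp [Matrix.map_apply]
    have hone : (1 : Matrix (Fin n) (Fin n) ℝ).map Complex.ofReal = 1 := by
      ext i j; by_cases h : i = j <;> simp [Matrix.map_apply, Matrix.one_apply, h]
    have hzero : (0 : Matrix (Fin n) (Fin n) ℝ).map Complex.ofReal = 0 := by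
      ext i j; simp [Matrix.map_apply]
    rw [hadd, hadd, hone, hzero, hmapmul, hmapmul] at h0
    rw [← hBH, ← hBdef, ← hPcdef] at h0
    exact h0
  obtain ⟨U, T, hU, hUT, htri⟩ := schur n B
  have hUU : U * Uᴴ = 1 := mul_eq_one_comm.mp hU
  set S : Matrix (Fin n) (Fin n) ℂ := Uᴴ * Pc * U with hSdef
  have hroots : B.charpoly.roots = Finset.univ.val.map (fun i => T i i) := by
    rw [← charpoly_unitary_conj U B hU, hUT]
    exact tri_roots T htri
  have hRe : ∀ i, (T i i).re < 0 := by
    intro i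
    apply hHurwitz
    rw [hroots]
    exact Multiset.mem_map_of_mem _ (Finset.mem_univ i)
  have hconj_inj : ∀ X Y : Matrix (Fin n) (Fin n) ℂ, Uᴴ * X * U = Uᴴ * Y * U → X = Y := by
    intro X Y h
    have h2 := congrArg (fun M => U * M * Uᴴ) h
    have e : ∀ Z : Matrix (Fin n) (Fin n) ℂ, U * (Uᴴ * Z * U) * Uᴴ = Z := by
      intro Z
      calc U * (Uᴴ * Z * U) * Uᴴ = (U * Uᴴ) * Z * (U * Uᴴ) := by noncomm_ring
        _ = Z := by rw [hUU]; noncomm_ring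
    rw [e X, e Y] at h2
    exact h2
  have hTH : Tᴴ = Uᴴ * Bᴴ * U := by
    rw [← hUT]
    rw [Matrix.conjTranspose_mul, Matrix.conjTranspose_mul, Matrix.conjTranspose_conjTranspose]
    noncomm_ring
  have hS : S * T + Tᴴ * S + 1 = 0 := by
    have h1 : Pc * B + Bᴴ * Pc = -1 := by
      have := hPc
      rwa [← eq_neg_iff_add_eq_zero] at this
    rw [hSdef, hTH, ← hUT]
    calc Uᴴ * Pc * U * (Uᴴ * B * U) + Uᴴ * Bᴴ * U * (Uᴴ * Pc * U) + 1
        = Uᴴ * (Pc * (U * Uᴴ) * B) * U + Uᴴ * (Bᴴ * (U * Uᴴ) * Pc) * U + 1 := by noncomm_ring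
      _ = Uᴴ * (Pc * B + Bᴴ * Pc) * U + 1 := by rw [hUU]; noncomm_ring
      _ = Uᴴ * (-1) * U + 1 := by rw [h1]
      _ = -(Uᴴ * U) + 1 := by noncomm_ring
      _ = 0 := by rw [hU]; exact neg_add_cancel 1
  obtain ⟨hPD, hineq, hiff⟩ := lyap_main n T S htri hRe hS
  have htrace : P.trace = ∑ i, (S i i).re := by
    have h1 : S.trace = Pc.trace := by
      rw [hSdef, Matrix.trace_mul_cycle]
      rw [hUU, Matrix.one_mul]
    have h2 : Pc.trace = ((P.trace : ℝ) : ℂ) := by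
      rw [hPcdef]
      simp [Matrix.trace, Matrix.diag, Matrix.map_apply]
    have h3 : (S.trace).re = ∑ i, (S i i).re := by
      simp [Matrix.trace, Matrix.diag, Complex.re_sum]
    rw [← h3, h1, h2, Complex.ofReal_re]
  have hsum : -((B.charpoly.roots.map (fun μ => 1 / (2 * μ.re))).sum)
      = ∑ i, -(1/(2*(T i i).re)) := by
    rw [hroots, Multiset.map_map]
    have h1 : (Multiset.map ((fun μ => 1 / (2 * μ.re)) ∘ fun i => T i i) Finset.univ.val).sum
        = ∑ i, (1/(2*(T i i).re)) := rfl
    rw [h1, ← Finset.sum_neg_distrib]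
  have hnormal_transfer : (Tᴴ * T = T * Tᴴ) ↔ (Aᵀ * A = A * Aᵀ) := by
    have hBB : Bᴴ * B = (Aᵀ * A).map Complex.ofReal := by rw [hBH, hmapmul, hBdef]
    have hBB2 : B * Bᴴ = (A * Aᵀ).map Complex.ofReal := by rw [hBH, hmapmul, hBdef]
    have hTT : Tᴴ * T = Uᴴ * (Bᴴ * B) * U := by
      rw [hTH, ← hUT]
      calc Uᴴ * Bᴴ * U * (Uᴴ * B * U) = Uᴴ * (Bᴴ * (U * Uᴴ) * B) * U := by noncomm_ring
        _ = Uᴴ * (Bᴴ * B) * U := by rw [hUU]; noncomm_ring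
    have hTT2 : T * Tᴴ = Uᴴ * (B * Bᴴ) * U := by
      rw [hTH, ← hUT]
      calc Uᴴ * B * U * (Uᴴ * Bᴴ * U) = Uᴴ * (B * (U * Uᴴ) * Bᴴ) * U := by noncomm_ring
        _ = Uᴴ * (B * Bᴴ) * U := by rw [hUU]; noncomm_ring
    constructor
    · intro h
      rw [hTT, hTT2] at h
      have h2 := hconj_inj _ _ h
      rw [hBB, hBB2] at h2
      ext i j
      have h3 := congrFun (congrFun h2 i) j
      simpa [Matrix.map_apply] using h3
    · intro h
      rw [hTT, hTT2, hBB, hBB2, h]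
  rw [htrace]
  rw [show -((B.charpoly.roots.map (fun μ => 1 / (2 * μ.re))).sum)
      = ∑ i, -(1/(2*(T i i).re)) from hsum] at *
  constructor
  · intro h
    have hdev : (∑ i, (S i i).re) - (∑ i, -(1 / (2 * (T i i).re))) = 0 := by
      rw [h]; ring
    have hdiag := hiff.mp hdev
    exact hnormal_transfer.mp (diag_normal T hdiag)
  · intro h
    have hdiag := tri_normal_diag T htri (hnormal_transfer.mpr h)
    have hdev := hiff.mpr hdiag
    linarith [hdev]
end
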